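/- arXiv:2206.13141 — 4 statements merged into one kernel-verified Lean document; each statement's English description precedes it below -/
import Mathlib

section
/- Let a < b be real numbers and let ε satisfy 0 < 2ε < b - a. Define y(x) = sqrt((x - a)(b - x)) on (a, b), and set x₋ = ((a + b) - sqrt((b - a)^2 - 4ε^2))/2 and x₊ = ((a + b) + sqrt((b - a)^2 - 4ε^2))/2. Then the integral of (1 / y(x)) · sqrt(1 + (y'(x))^2) over x from x₋ to x₊ equals 2 · log((b - a + sqrt((b - a)^2 - 4ε^2)) / (2ε)). -/
/-- For `a < b`, `0 < 2ε < b - a`, `y x = √((x-a)(b-x))` and `x₋, x₊` the two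
roots of `ε² + (x-a)(x-b) = 0`, the hyperbolic length integral
`∫ (1/y)√(1 + y'²)` from `x₋` to `x₊` equals
`2 log((b - a + √((b-a)² - 4ε²)) / (2ε))`. -/
theorem stmt_2 (a b ε : ℝ) (hab : a < b) (hε : 0 < ε) (hεab : 2 * ε < b - a)
    (y : ℝ → ℝ) (hy : ∀ x, y x = Real.sqrt ((x - a) * (b - x)))
    (xm xp : ℝ)
    (hxm : xm = ((a + b) - Real.sqrt ((b - a) ^ 2 - 4 * ε ^ 2)) / 2)
    (hxp : xp = ((a + b) + Real.sqrt ((b - a) ^ 2 - 4 * ε ^ 2)) / 2) :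
    ∫ x in xm..xp, (1 / y x) * Real.sqrt (1 + (deriv y x) ^ 2)
      = 2 * Real.log ((b - a + Real.sqrt ((b - a) ^ 2 - 4 * ε ^ 2)) / (2 * ε)) := by
  have hs0 : (0:ℝ) < (b - a) ^ 2 - 4 * ε ^ 2 := by nlinarith
  set s := Real.sqrt ((b - a) ^ 2 - 4 * ε ^ 2) with hsdef
  have hs : 0 < s := Real.sqrt_pos.mpr hs0
  have hs2 : s ^ 2 = (b - a) ^ 2 - 4 * ε ^ 2 := Real.sq_sqrt hs0.le
  have hsb : s < b - a := by nlinarith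
  have hax : a < xm := by rw [hxm]; linarith
  have hxb : xp < b := by rw [hxp]; linarith
  have hmp : xm < xp := by rw [hxm, hxp]; linarith
  -- step 1: the integrand equals (b-a)/(2*((x-a)*(b-x))) on the interval
  have key : ∀ x ∈ Set.uIcc xm xp,
      (1 / y x) * Real.sqrt (1 + (deriv y x) ^ 2)
        = (b - a) / (2 * ((x - a) * (b - x))) := by
    intro x hx
    rw [Set.uIcc_of_le hmp.le] at hx
    have hx1 : a < x := lt_of_lt_of_le hax hx.1
    have hx2 : x < b := lt_of_le_of_lt hx.2 hxb
    have hg : 0 < (x - a) * (b - x) := by nlinarith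
    have hsg : 0 < Real.sqrt ((x - a) * (b - x)) := Real.sqrt_pos.mpr hg
    have hsq : Real.sqrt ((x - a) * (b - x)) ^ 2 = (x - a) * (b - x) :=
      Real.sq_sqrt hg.le
    have h1 : HasDerivAt (fun t : ℝ => (t - a) * (b - t)) (a + b - 2 * x) x := by
      have := ((hasDerivAt_id x).sub_const a).mul
        ((hasDerivAt_const x b).sub (hasDerivAt_id x))
      refine this.congr_deriv ?_
      simp; ring
    have hder : HasDerivAt y
        ((a + b - 2 * x) / (2 * Real.sqrt ((x - a) * (b - x)))) x := by
      have h2 := (Real.hasDerivAt_sqrt (ne_of_gt hg)).comp x h1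
      have hyy : y = fun t => Real.sqrt ((t - a) * (b - t)) := funext hy
      rw [hyy]
      exact h2.congr_deriv (by ring)
    rw [hder.deriv, hy]
    have h4 : 1 + ((a + b - 2 * x) / (2 * Real.sqrt ((x - a) * (b - x)))) ^ 2
        = ((b - a) / (2 * Real.sqrt ((x - a) * (b - x)))) ^ 2 := by
      field_simp
      nlinarith [hsq]
    rw [h4, Real.sqrt_sq (div_nonneg (by linarith) (by positivity))]
    rw [div_mul_div_comm]
    rw [one_mul]
    rw [div_eq_div_iff (by positivity) (by positivity)]
    nlinarith [hsq]
  rw [intervalIntegral.integral_congr key]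
  -- step 2: FTC
  have hint : ∫ x in xm..xp, (b - a) / (2 * ((x - a) * (b - x)))
      = ((1/2) * (Real.log (xp - a) - Real.log (b - xp)))
        - ((1/2) * (Real.log (xm - a) - Real.log (b - xm))) := by
    apply intervalIntegral.integral_eq_sub_of_hasDerivAt
    · intro x hx
      rw [Set.uIcc_of_le hmp.le] at hx
      have hx1 : a < x := lt_of_lt_of_le hax hx.1
      have hx2 : x < b := lt_of_le_of_lt hx.2 hxb
      have hA : HasDerivAt (fun t : ℝ => Real.log (t - a)) (1 / (x - a)) x := by
        have := (Real.hasDerivAt_log (by linarith : x - a ≠ 0)).comp x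
          ((hasDerivAt_id x).sub_const a)
        exact this.congr_deriv (by simp)
      have hB : HasDerivAt (fun t : ℝ => Real.log (b - t)) (-(1 / (b - x))) x := by
        have := (Real.hasDerivAt_log (by linarith : b - x ≠ 0)).comp x
          ((hasDerivAt_const x b).sub (hasDerivAt_id x))
        exact this.congr_deriv (by ring)
      have := (hA.sub hB).const_mul ((1:ℝ)/2)
      refine this.congr_deriv ?_
      have h1 : x - a ≠ 0 := by linarith
      have h2 : b - x ≠ 0 := by linarith
      field_simp
      ring
    · apply ContinuousOn.intervalIntegrable
      apply ContinuousOn.div continuousOn_const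
      · fun_prop
      · intro x hx
        rw [Set.uIcc_of_le hmp.le] at hx
        have hx1 : a < x := lt_of_lt_of_le hax hx.1
        have hx2 : x < b := lt_of_le_of_lt hx.2 hxb
        have hg : 0 < (x - a) * (b - x) := by nlinarith
        positivity
  rw [hint]
  -- step 3: evaluate
  have e1 : xp - a = (b - a + s) / 2 := by rw [hxp]; ring
  have e2 : b - xp = (b - a - s) / 2 := by rw [hxp]; ring
  have e3 : xm - a = (b - a - s) / 2 := by rw [hxm]; ring
  have e4 : b - xm = (b - a + s) / 2 := by rw [hxm]; ring
  rw [e1, e2, e3, e4]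
  have hP : (0:ℝ) < (b - a + s) / 2 := by linarith
  have hM : (0:ℝ) < (b - a - s) / 2 := by linarith
  have hPM : ((b - a + s) / 2) * ((b - a - s) / 2) = ε ^ 2 := by linear_combination (-1/4 : ℝ) * hs2
  have hlog : Real.log ((b - a + s) / 2) + Real.log ((b - a - s) / 2)
      = 2 * Real.log ε := by
    rw [← Real.log_mul hP.ne' hM.ne', hPM]
    rw [show ε ^ 2 = ε * ε by ring, Real.log_mul hε.ne' hε.ne']
    ring
  have hrhs : Real.log ((b - a + s) / (2 * ε))
      = Real.log ((b - a + s) / 2) - Real.log ε := by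
    rw [show (b - a + s) / (2 * ε) = ((b - a + s) / 2) / ε by ring]
    exact Real.log_div hP.ne' hε.ne'
  rw [hrhs]
  linarith [hlog]
end

section
/- Let a₁ < a₂ < a₃ < a₄ be real numbers, and for 0 < 2ε < b - a set L(a, b, ε) = 2 · log((b - a + sqrt((b - a)^2 - 4ε^2)) / (2ε)). Then, as ε tends to 0 from the right, the quantity L(a₁, a₂, ε) + L(a₃, a₄, ε) - L(a₁, a₃, ε) - L(a₂, a₄, ε) converges to 2 · log( ((a₂ - a₁)(a₄ - a₃)) / ((a₃ - a₁)(a₄ - a₂)) ), i.e. twice the natural logarithm of the cross ratio [a₁, a₄; a₂, a₃]. -/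
open Filter

/-- The truncated hyperbolic length of the geodesic joining the ideal boundary
points `a < b`, cut off at height `ε`:
`L(a, b, ε) = 2 log((b - a + √((b-a)² - 4ε²)) / (2ε))`. -/
noncomputable def truncGeodesicLength (a b ε : ℝ) : ℝ :=
  2 * Real.log ((b - a + Real.sqrt ((b - a) ^ 2 - 4 * ε ^ 2)) / (2 * ε))

private lemma aux_pos (a b ε : ℝ) (hab : a < b) :
    0 < b - a + Real.sqrt ((b - a) ^ 2 - 4 * ε ^ 2) := by
  have := Real.sqrt_nonneg ((b - a) ^ 2 - 4 * ε ^ 2)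
  linarith

private lemma aux_tendsto (a b : ℝ) (hab : a < b) :
    Tendsto (fun ε : ℝ => Real.log (b - a + Real.sqrt ((b - a) ^ 2 - 4 * ε ^ 2)))
      (nhdsWithin 0 (Set.Ioi 0)) (nhds (Real.log (2 * (b - a)))) := by
  have hc : Continuous fun ε : ℝ => b - a + Real.sqrt ((b - a) ^ 2 - 4 * ε ^ 2) := by
    continuity
  have h0 : b - a + Real.sqrt ((b - a) ^ 2 - 4 * (0:ℝ) ^ 2) = 2 * (b - a) := by
    rw [show (b - a) ^ 2 - 4 * (0:ℝ) ^ 2 = (b - a) ^ 2 by ring,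
      Real.sqrt_sq (by linarith : (0:ℝ) ≤ b - a)]
    ring
  have hb : (0:ℝ) < b - a := by linarith
  have hcomp : ContinuousAt (fun ε : ℝ =>
      Real.log (b - a + Real.sqrt ((b - a) ^ 2 - 4 * ε ^ 2))) 0 :=
    hc.continuousAt.log (by rw [h0]; positivity)
  have ht := hcomp.tendsto
  rw [h0] at ht
  exact ht.mono_left nhdsWithin_le_nhds

/-- For `a₁ < a₂ < a₃ < a₄`, as `ε → 0⁺`, the difference of truncated geodesic
lengths `L(a₁,a₂,ε) + L(a₃,a₄,ε) - L(a₁,a₃,ε) - L(a₂,a₄,ε)` converges to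
twice the log of the cross ratio `[a₁,a₄;a₂,a₃]`. -/
theorem stmt_7 (a₁ a₂ a₃ a₄ : ℝ) (h12 : a₁ < a₂) (h23 : a₂ < a₃) (h34 : a₃ < a₄) :
    Tendsto (fun ε : ℝ =>
        truncGeodesicLength a₁ a₂ ε + truncGeodesicLength a₃ a₄ ε
          - truncGeodesicLength a₁ a₃ ε - truncGeodesicLength a₂ a₄ ε)
      (nhdsWithin 0 (Set.Ioi 0))
      (nhds (2 * Real.log (((a₂ - a₁) * (a₄ - a₃)) / ((a₃ - a₁) * (a₄ - a₂))))) := by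
  have h13 : a₁ < a₃ := h12.trans h23
  have h24 : a₂ < a₄ := h23.trans h34
  set l := fun (a b : ℝ) (ε : ℝ) => Real.log (b - a + Real.sqrt ((b - a) ^ 2 - 4 * ε ^ 2))
  have heq : ∀ ε ∈ Set.Ioi (0:ℝ),
      truncGeodesicLength a₁ a₂ ε + truncGeodesicLength a₃ a₄ ε
        - truncGeodesicLength a₁ a₃ ε - truncGeodesicLength a₂ a₄ ε
      = 2 * (l a₁ a₂ ε + l a₃ a₄ ε - l a₁ a₃ ε - l a₂ a₄ ε) := by
    intro ε hε
    have hε' : (0:ℝ) < 2 * ε := by simpa using mul_pos two_pos (Set.mem_Ioi.mp hε)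
    have e : ∀ (a b : ℝ), a < b → truncGeodesicLength a b ε = 2 * (l a b ε - Real.log (2 * ε)) := by
      intro a b hab
      unfold truncGeodesicLength
      rw [Real.log_div (aux_pos a b ε hab).ne' hε'.ne']
    rw [e _ _ h12, e _ _ h34, e _ _ h13, e _ _ h24]; ring
  have hT : Tendsto (fun ε => 2 * (l a₁ a₂ ε + l a₃ a₄ ε - l a₁ a₃ ε - l a₂ a₄ ε))
      (nhdsWithin 0 (Set.Ioi 0))
      (nhds (2 * (Real.log (2 * (a₂ - a₁)) + Real.log (2 * (a₄ - a₃))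
        - Real.log (2 * (a₃ - a₁)) - Real.log (2 * (a₄ - a₂))))) :=
    (((((aux_tendsto _ _ h12).add (aux_tendsto _ _ h34)).sub
      (aux_tendsto _ _ h13)).sub (aux_tendsto _ _ h24)).const_mul 2)
  have hval : 2 * (Real.log (2 * (a₂ - a₁)) + Real.log (2 * (a₄ - a₃))
        - Real.log (2 * (a₃ - a₁)) - Real.log (2 * (a₄ - a₂)))
      = 2 * Real.log (((a₂ - a₁) * (a₄ - a₃)) / ((a₃ - a₁) * (a₄ - a₂))) := by
    have p12 : (0:ℝ) < a₂ - a₁ := by linarith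
    have p34 : (0:ℝ) < a₄ - a₃ := by linarith
    have p13 : (0:ℝ) < a₃ - a₁ := by linarith
    have p24 : (0:ℝ) < a₄ - a₂ := by linarith
    have e2 : ∀ x : ℝ, 0 < x → Real.log (2 * x) = Real.log 2 + Real.log x :=
      fun x hx => Real.log_mul two_ne_zero hx.ne'
    rw [e2 _ p12, e2 _ p34, e2 _ p13, e2 _ p24,
      Real.log_div (mul_pos p12 p34).ne' (mul_pos p13 p24).ne',
      Real.log_mul p12.ne' p34.ne', Real.log_mul p13.ne' p24.ne']
    ring
  rw [← hval]
  exact hT.congr' (eventually_nhdsWithin_of_forall fun ε hε => (heq ε hε).symm)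
end

section
/- Let a < b be real numbers, R = (b - a)/2, c = (a + b)/2, and let ε satisfy 0 < ε < R. Define the curve γ from ℝ to the hyperbolic upper half-plane by γ(θ) = c + R·e^{iθ} (which has positive imaginary part for θ in (0, π)). Then the total variation of γ, with respect to the hyperbolic distance, over the closed interval [arcsin(ε/R), π - arcsin(ε/R)] equals 2 · log((b - a + sqrt((b - a)^2 - 4ε^2)) / (2ε)). -/
open Real


lemma im_eq (c R θ : ℝ) (z : UpperHalfPlane) (h : (z : ℂ) = (c:ℂ) + (R:ℂ) * Complex.exp (θ * Complex.I)) :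
    z.im = R * Real.sin θ := by
  rw [← UpperHalfPlane.coe_im, h]
  simp [Complex.exp_mul_I, Complex.add_im, Complex.mul_im, Complex.sin_ofReal_im, Complex.sin_ofReal_re, Complex.cos_ofReal_re,
    Complex.cos_ofReal_im]

lemma chord (c R x y : ℝ) (hR : 0 < R) (hxy : x ≤ y) (hd : y - x ≤ π) :
    dist ((c:ℂ) + (R:ℂ) * Complex.exp (x * Complex.I)) ((c:ℂ) + (R:ℂ) * Complex.exp (y * Complex.I))
      = R * (2 * Real.sin ((y - x)/2)) := by
  rw [Complex.dist_eq]
  have e : ((c:ℂ) + (R:ℂ) * Complex.exp (x * Complex.I)) - ((c:ℂ) + (R:ℂ) * Complex.exp (y * Complex.I))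
      = (R:ℂ) * (Complex.exp (x * Complex.I) - Complex.exp (y * Complex.I)) := by ring
  rw [e, norm_mul, Complex.norm_real, Real.norm_eq_abs, abs_of_pos hR]
  congr 1
  have hs : 0 ≤ Real.sin ((y - x)/2) :=
    Real.sin_nonneg_of_nonneg_of_le_pi (by linarith) (by linarith)
  have habs : (‖Complex.exp (x * Complex.I) - Complex.exp (y * Complex.I)‖)^2
      = (2 * Real.sin ((y - x)/2))^2 := by
    rw [Complex.sq_norm, Complex.normSq_apply]
    simp only [Complex.exp_mul_I, Complex.sub_re, Complex.sub_im, Complex.add_re, Complex.add_im,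
      Complex.mul_re, Complex.mul_im, Complex.I_re, Complex.I_im, Complex.ofReal_re,
      Complex.ofReal_im, Complex.cos_ofReal_re, Complex.sin_ofReal_re, Complex.cos_ofReal_im,
      Complex.sin_ofReal_im]
    have h1 : Real.cos (y - x) = 1 - 2 * Real.sin ((y - x)/2) ^ 2 := by
      have h := Real.cos_two_mul ((y - x)/2)
      have hyx : 2 * ((y - x)/2) = y - x := by ring
      rw [hyx] at h
      nlinarith [Real.sin_sq_add_cos_sq ((y - x)/2)]
    have h2 : Real.cos (y - x) = Real.cos y * Real.cos x + Real.sin y * Real.sin x := Real.cos_sub y x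
    nlinarith [Real.sin_sq_add_cos_sq x, Real.sin_sq_add_cos_sq y]
  have h2 : 0 ≤ ‖Complex.exp (x * Complex.I) - Complex.exp (y * Complex.I)‖ := by positivity
  nlinarith

lemma sinh_log (t1 t2 : ℝ) (h1 : 0 < t1) (h2 : 0 < t2) :
    Real.sinh ((Real.log t2 - Real.log t1)/2) = (t2 - t1)/(2*(√t1*√t2)) := by
  have e1 : (Real.log t2 - Real.log t1)/2 = Real.log (√t2) - Real.log (√t1) := by
    rw [Real.log_sqrt h1.le, Real.log_sqrt h2.le]; ring
  have s1 : (0:ℝ) < √t1 := Real.sqrt_pos.2 h1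
  have s2 : (0:ℝ) < √t2 := Real.sqrt_pos.2 h2
  rw [e1, Real.sinh_eq, Real.exp_sub, neg_sub, Real.exp_sub, Real.exp_log s1, Real.exp_log s2]
  have m1 : √t1 * √t1 = t1 := Real.mul_self_sqrt h1.le
  have m2 : √t2 * √t2 = t2 := Real.mul_self_sqrt h2.le
  rw [div_sub_div _ _ s1.ne' s2.ne', m1, m2, div_div]
  ring

lemma trig_id (x y : ℝ) (hx0 : 0 < x) (hxy : x ≤ y) (hyπ : y < π) :
    Real.sin ((y - x)/2) / √(Real.sin x * Real.sin y)
      = (Real.tan (y/2) - Real.tan (x/2)) / (2*(√(Real.tan (x/2)) * √(Real.tan (y/2)))) := by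
  have hc1 : 0 < Real.cos (x/2) := Real.cos_pos_of_mem_Ioo ⟨by linarith [Real.pi_pos], by linarith⟩
  have hc2 : 0 < Real.cos (y/2) := Real.cos_pos_of_mem_Ioo ⟨by linarith [Real.pi_pos], by linarith⟩
  have hs1 : 0 < Real.sin (x/2) := Real.sin_pos_of_pos_of_lt_pi (by linarith) (by linarith [Real.pi_pos])
  have hs2 : 0 < Real.sin (y/2) := Real.sin_pos_of_pos_of_lt_pi (by linarith) (by linarith [Real.pi_pos])
  have ht1 : 0 < Real.tan (x/2) := by rw [Real.tan_eq_sin_div_cos]; positivity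
  have ht2 : 0 < Real.tan (y/2) := by rw [Real.tan_eq_sin_div_cos]; positivity
  have hsinx : Real.sin x = 2 * Real.tan (x/2) * Real.cos (x/2)^2 := by
    have h := Real.sin_two_mul (x/2)
    rw [show 2 * (x/2) = x by ring] at h
    rw [h, Real.tan_eq_sin_div_cos]; field_simp
  have hsiny : Real.sin y = 2 * Real.tan (y/2) * Real.cos (y/2)^2 := by
    have h := Real.sin_two_mul (y/2)
    rw [show 2 * (y/2) = y by ring] at h
    rw [h, Real.tan_eq_sin_div_cos]; field_simp
  have hsind : Real.sin ((y - x)/2) = Real.cos (x/2) * Real.cos (y/2) * (Real.tan (y/2) - Real.tan (x/2)) := by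
    rw [show (y - x)/2 = y/2 - x/2 by ring, Real.sin_sub, Real.tan_eq_sin_div_cos,
      Real.tan_eq_sin_div_cos]
    field_simp
  have hT : Real.tan (x/2) ≤ Real.tan (y/2) := by
    nlinarith [Real.sin_nonneg_of_nonneg_of_le_pi (by linarith : (0:ℝ) ≤ (y-x)/2) (by linarith [Real.pi_pos] : (y-x)/2 ≤ π), hsind, mul_pos hc1 hc2]
  -- square both sides
  have hLnn : 0 ≤ Real.sin ((y - x)/2) / √(Real.sin x * Real.sin y) := by
    apply div_nonneg (Real.sin_nonneg_of_nonneg_of_le_pi (by linarith) (by linarith [Real.pi_pos]))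
    positivity
  have hRnn : 0 ≤ (Real.tan (y/2) - Real.tan (x/2)) / (2*(√(Real.tan (x/2)) * √(Real.tan (y/2)))) := by
    apply div_nonneg (by linarith); positivity
  have hsq : (Real.sin ((y - x)/2) / √(Real.sin x * Real.sin y))^2
      = ((Real.tan (y/2) - Real.tan (x/2)) / (2*(√(Real.tan (x/2)) * √(Real.tan (y/2)))))^2 := by
    have hps : 0 < Real.sin x * Real.sin y := by
      have := Real.sin_pos_of_pos_of_lt_pi hx0 (lt_of_le_of_lt hxy hyπ)
      have := Real.sin_pos_of_pos_of_lt_pi (lt_of_lt_of_le hx0 hxy) hyπ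
      positivity
    rw [div_pow, div_pow, Real.sq_sqrt hps.le, mul_pow, mul_pow, Real.sq_sqrt ht1.le,
      Real.sq_sqrt ht2.le, hsind, hsinx, hsiny]
    field_simp
  calc Real.sin ((y - x)/2) / √(Real.sin x * Real.sin y)
      = √((Real.sin ((y - x)/2) / √(Real.sin x * Real.sin y))^2) := (Real.sqrt_sq hLnn).symm
    _ = √(((Real.tan (y/2) - Real.tan (x/2)) / (2*(√(Real.tan (x/2)) * √(Real.tan (y/2)))))^2) := by rw [hsq]
    _ = _ := Real.sqrt_sq hRnn
section
variable (c R : ℝ)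

lemma dist_formula (hR : 0 < R) (z w : UpperHalfPlane) (x y : ℝ)
    (hx0 : 0 < x) (hxy : x ≤ y) (hyπ : y < π)
    (hz : (z : ℂ) = (c:ℂ) + (R:ℂ) * Complex.exp (x * Complex.I))
    (hw : (w : ℂ) = (c:ℂ) + (R:ℂ) * Complex.exp (y * Complex.I)) :
    dist z w = Real.log (Real.tan (y/2)) - Real.log (Real.tan (x/2)) := by
  have hc1 : 0 < Real.cos (x/2) := Real.cos_pos_of_mem_Ioo ⟨by linarith [Real.pi_pos], by linarith⟩
  have hc2 : 0 < Real.cos (y/2) := Real.cos_pos_of_mem_Ioo ⟨by linarith [Real.pi_pos], by linarith⟩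
  have hs1 : 0 < Real.sin (x/2) := Real.sin_pos_of_pos_of_lt_pi (by linarith) (by linarith [Real.pi_pos])
  have hs2 : 0 < Real.sin (y/2) := Real.sin_pos_of_pos_of_lt_pi (by linarith) (by linarith [Real.pi_pos])
  have ht1 : 0 < Real.tan (x/2) := by rw [Real.tan_eq_sin_div_cos]; positivity
  have ht2 : 0 < Real.tan (y/2) := by rw [Real.tan_eq_sin_div_cos]; positivity
  have hsx : 0 < Real.sin x := Real.sin_pos_of_pos_of_lt_pi hx0 (lt_of_le_of_lt hxy hyπ)
  have hsy : 0 < Real.sin y := Real.sin_pos_of_pos_of_lt_pi (lt_of_lt_of_le hx0 hxy) hyπ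
  have key : Real.sinh (dist z w / 2)
      = Real.sinh ((Real.log (Real.tan (y/2)) - Real.log (Real.tan (x/2)))/2) := by
    rw [UpperHalfPlane.sinh_half_dist, im_eq c R x z hz, im_eq c R y w hw, hz, hw,
      chord c R x y hR hxy (by linarith [Real.pi_pos]),
      sinh_log _ _ ht1 ht2, ← trig_id x y hx0 hxy hyπ,
      show R * Real.sin x * (R * Real.sin y) = R^2 * (Real.sin x * Real.sin y) by ring,
      Real.sqrt_mul (sq_nonneg R), Real.sqrt_sq hR.le]
    have hq : 0 < √(Real.sin x * Real.sin y) := Real.sqrt_pos.2 (by positivity)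
    field_simp
  have := Real.sinh_injective key
  linarith
end

lemma evar_aux {γ : ℝ → UpperHalfPlane} {g : ℝ → ℝ} {l u : ℝ} (hlu : l ≤ u)
    (h : ∀ x ∈ Set.Icc l u, ∀ y ∈ Set.Icc l u, x ≤ y → dist (γ x) (γ y) = g y - g x) :
    eVariationOn γ (Set.Icc l u) = ENNReal.ofReal (g u - g l) := by
  have hlm : l ∈ Set.Icc l u := ⟨le_rfl, hlu⟩
  have hum : u ∈ Set.Icc l u := ⟨hlu, le_rfl⟩
  apply le_antisymm
  · apply iSup_le
    rintro ⟨n, ⟨f, hf, fs⟩⟩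
    have key : ∀ i : ℕ, edist (γ (f (i+1))) (γ (f i)) =
        ENNReal.ofReal (g (f (i+1)) - g (f i)) := by
      intro i
      rw [edist_dist, dist_comm, h _ (fs i) _ (fs (i+1)) (hf (Nat.le_succ i))]
    calc ∑ i ∈ Finset.range n, edist (γ (f (i+1))) (γ (f i))
        = ∑ i ∈ Finset.range n, ENNReal.ofReal (g (f (i+1)) - g (f i)) := by
          exact Finset.sum_congr rfl fun i _ => key i
      _ = ENNReal.ofReal (∑ i ∈ Finset.range n, (g (f (i+1)) - g (f i))) := by
          rw [ENNReal.ofReal_sum_of_nonneg]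
          intro i _
          have h1 := h _ (fs i) _ (fs (i+1)) (hf (Nat.le_succ i))
          have h2 : (0:ℝ) ≤ dist (γ (f i)) (γ (f (i+1))) := dist_nonneg
          linarith
      _ = ENNReal.ofReal (g (f n) - g (f 0)) := by
          rw [Finset.sum_range_sub fun i => g (f i)]
      _ ≤ ENNReal.ofReal (g u - g l) := by
          apply ENNReal.ofReal_le_ofReal
          have h1 := h _ (fs n) _ hum (fs n).2
          have h2 := h _ hlm _ (fs 0) (fs 0).1
          have h3 : (0:ℝ) ≤ dist (γ (f n)) (γ u) := dist_nonneg
          have h4 : (0:ℝ) ≤ dist (γ l) (γ (f 0)) := dist_nonneg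
          linarith
  · have h1 := eVariationOn.edist_le γ hum hlm
    rwa [edist_dist, dist_comm, h _ hlm _ hum hlu] at h1
/-- Let `a < b`, `R = (b-a)/2`, `c = (a+b)/2`, `0 < ε < R`, and let
`γ : ℝ → ℍ` be a curve which on the interval
`[arcsin(ε/R), π - arcsin(ε/R)]` is given by `γ(θ) = c + R·e^{iθ}`
(parametrizing the geodesic semicircle `y² + (x-a)(x-b) = 0`). Then the total
variation of `γ` over that interval — with respect to the hyperbolic
distance — equals `2 log((b - a + √((b-a)² - 4ε²)) / (2ε))`. -/
theorem stmt_9 (a b R c ε : ℝ) (hab : a < b)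
    (hR : R = (b - a) / 2) (hc : c = (a + b) / 2)
    (hε : 0 < ε) (hεR : ε < R)
    (γ : ℝ → UpperHalfPlane)
    (hγ : ∀ θ ∈ Set.Icc (arcsin (ε / R)) (π - arcsin (ε / R)),
      (γ θ : ℂ) = (c : ℂ) + (R : ℂ) * Complex.exp (θ * Complex.I)) :
    eVariationOn γ (Set.Icc (arcsin (ε / R)) (π - arcsin (ε / R)))
      = ENNReal.ofReal
          (2 * Real.log ((b - a + Real.sqrt ((b - a) ^ 2 - 4 * ε ^ 2)) / (2 * ε))) := by
  have hRpos : 0 < R := by rw [hR]; linarith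
  set l := arcsin (ε / R) with hldef
  have hεR0 : 0 < ε / R := div_pos hε hRpos
  have hεR1 : ε / R < 1 := (div_lt_one hRpos).2 hεR
  have hl0 : 0 < l := Real.arcsin_pos.2 hεR0
  have hlπ : l < π / 2 := Real.arcsin_lt_pi_div_two.2 hεR1
  have hlu : l ≤ π - l := by linarith
  have hdist : ∀ x ∈ Set.Icc l (π - l), ∀ y ∈ Set.Icc l (π - l), x ≤ y →
      dist (γ x) (γ y) = (fun θ => Real.log (Real.tan (θ/2))) y
        - (fun θ => Real.log (Real.tan (θ/2))) x := by
    intro x hx y hy hxy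
    exact dist_formula c R hRpos (γ x) (γ y) x y (lt_of_lt_of_le hl0 hx.1) hxy
      (lt_of_le_of_lt hy.2 (by linarith)) (hγ x hx) (hγ y hy)
  rw [evar_aux hlu hdist]
  congr 1
  show Real.log (Real.tan ((π - l)/2)) - Real.log (Real.tan (l/2)) = _
  -- now a real-number identity
  have hsl : Real.sin l = ε / R := Real.sin_arcsin (by linarith) hεR1.le
  have hC : Real.cos l = √(R^2 - ε^2) / R := by
    rw [hldef, Real.cos_arcsin, show 1 - (ε/R)^2 = (R^2 - ε^2)/R^2 by field_simp,
      Real.sqrt_div (by nlinarith), Real.sqrt_sq hRpos.le]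
  have hc1 : 0 < Real.cos (l/2) := Real.cos_pos_of_mem_Ioo ⟨by linarith, by linarith⟩
  have hs1 : 0 < Real.sin (l/2) := Real.sin_pos_of_pos_of_lt_pi (by linarith) (by linarith)
  have h2s : Real.sin l = 2 * Real.sin (l/2) * Real.cos (l/2) := by
    have h := Real.sin_two_mul (l/2); rw [show 2*(l/2) = l by ring] at h; rw [h]
  have h2c : Real.cos l = 2 * Real.cos (l/2)^2 - 1 := by
    have h := Real.cos_two_mul (l/2); rw [show 2*(l/2) = l by ring] at h; rw [h]
  have hinv : (Real.tan (l/2))⁻¹ = (1 + Real.cos l) / Real.sin l := by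
    rw [Real.tan_eq_sin_div_cos, h2s, h2c, inv_div]
    field_simp; ring
  have hba : b - a = 2 * R := by rw [hR]; ring
  have hsqrt4 : √((b - a)^2 - 4*ε^2) = 2 * √(R^2 - ε^2) := by
    rw [show (b - a)^2 - 4*ε^2 = 2^2 * (R^2 - ε^2) by rw [hba]; ring,
      Real.sqrt_mul (by positivity), Real.sqrt_sq (by norm_num : (0:ℝ) ≤ 2)]
  have hval : (Real.tan (l/2))⁻¹ = (b - a + √((b - a)^2 - 4*ε^2)) / (2*ε) := by
    rw [hinv, hsl, hC, hsqrt4, hba]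
    field_simp
  rw [show (π - l)/2 = π/2 - l/2 by ring, Real.tan_pi_div_two_sub, Real.log_inv, ← hval,
    Real.log_inv]
  ring
end

section
/- Let n ≥ 2 and let m be an integer with 2 ≤ m ≤ n. Let δ > 0 and let Q = (-δ, δ)^{n-1} × [0, δ) ⊆ ℝⁿ with coordinates (x', y), x' ∈ ℝ^{n-1}, y ≥ 0. Suppose u and v are real-valued functions on Q all of whose partial derivatives up to order m exist and are continuous up to the boundary face {y = 0}, and that both satisfy, for y > 0, the graphical minimal surface equation in hyperbolic space: ∂ᵧ∂ᵧw + Σ_{i=1}^{n-1} ∂ᵢ∂ᵢw - Σ_{j,k ∈ {1,…,n-1,y}} (∂ⱼw · ∂ₖw · ∂ⱼ∂ₖw) / (1 + (∂ᵧw)² + Σ_{i=1}^{n-1}(∂ᵢw)²) - (n / y) · ∂ᵧw = 0. If u(x', 0) = v(x', 0) for all x' ∈ (-δ, δ)^{n-1}, then for every integer i with 0 ≤ i ≤ m and every x' ∈ (-δ, δ)^{n-1}, the i-th pure y-derivatives agree: ∂ᵧ^{(i)}u(x', 0) = ∂ᵧ^{(i)}v(x', 0). In particular ∂ᵧu(x',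 0) = 0 = ∂ᵧv(x', 0). -/
/-- The half-open box `Q = (-δ, δ)^k × [0, δ)` in coordinates `(x', y)`. -/
def boxQ (k : ℕ) (δ : ℝ) : Set ((Fin k → ℝ) × ℝ) :=
  {p | (∀ i, p.1 i ∈ Set.Ioo (-δ) δ) ∧ p.2 ∈ Set.Ico 0 δ}

/-- The coordinate direction vectors in `ℝ^k × ℝ`: `Sum.inl i` is the `i`-th
horizontal direction `∂ᵢ`, and `Sum.inr ()` is the vertical direction `∂ᵧ`. -/
def dirVec (k : ℕ) : Fin k ⊕ Unit → (Fin k → ℝ) × ℝ :=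
  Sum.elim (fun i => (Pi.single i 1, 0)) (fun _ => (0, 1))

/-- The directional derivative, within a set `Q`, of `f` in direction `w`. -/
noncomputable def dWithin {E : Type*} [NormedAddCommGroup E] [NormedSpace ℝ E]
    (Q : Set E) (f : E → ℝ) (w : E) (p : E) : ℝ :=
  fderivWithin ℝ f Q p w

/-- The second directional derivative, within a set `Q`. -/
noncomputable def d2Within {E : Type*} [NormedAddCommGroup E] [NormedSpace ℝ E]
    (Q : Set E) (f : E → ℝ) (w₁ w₂ : E) (p : E) : ℝ :=
  dWithin Q (dWithin Q f w₂) w₁ p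

/-- `w` satisfies, at the points of `Q = (-δ,δ)^{n-1} × [0,δ)` with `y > 0`,
the graphical minimal surface equation in hyperbolic space `ℍ^{n+1}`:
`∂ᵧ∂ᵧw + Σᵢ∂ᵢ∂ᵢw - Σⱼₖ ∂ⱼw ∂ₖw ∂ⱼ∂ₖw / (1 + (∂ᵧw)² + Σᵢ(∂ᵢw)²) - (n/y)∂ᵧw = 0`,
where the sums over `j, k` range over all of `{1, …, n-1, y}`. -/
def IsHypMinimalGraph (n : ℕ) (δ : ℝ) (w : ((Fin (n - 1) → ℝ) × ℝ) → ℝ) : Prop :=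
  ∀ p ∈ boxQ (n - 1) δ, 0 < p.2 →
    (∑ j : Fin (n - 1) ⊕ Unit,
        d2Within (boxQ (n - 1) δ) w (dirVec (n - 1) j) (dirVec (n - 1) j) p)
      - (∑ j : Fin (n - 1) ⊕ Unit, ∑ k : Fin (n - 1) ⊕ Unit,
          dWithin (boxQ (n - 1) δ) w (dirVec (n - 1) j) p
            * dWithin (boxQ (n - 1) δ) w (dirVec (n - 1) k) p
            * d2Within (boxQ (n - 1) δ) w (dirVec (n - 1) j) (dirVec (n - 1) k) p)
        / (1 + ∑ j : Fin (n - 1) ⊕ Unit,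
            (dWithin (boxQ (n - 1) δ) w (dirVec (n - 1) j) p) ^ 2)
      - (n / p.2) * dWithin (boxQ (n - 1) δ) w (dirVec (n - 1) (Sum.inr ())) p
      = 0


section AuxNamespace
open Set Filter Topology

namespace Aux12

abbrev EE (k : ℕ) := (Fin k → ℝ) × ℝ

noncomputable def Dw (k : ℕ) (δ : ℝ) (f : EE k → ℝ) (w : EE k) : EE k → ℝ :=
  fun p => fderivWithin ℝ f (boxQ k δ) p w

noncomputable def Dy (k : ℕ) (δ : ℝ) (f : EE k → ℝ) : EE k → ℝ :=
  Dw k δ f ((0 : Fin k → ℝ), (1 : ℝ))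

noncomputable def DyI (k : ℕ) (δ : ℝ) (j : ℕ) (f : EE k → ℝ) : EE k → ℝ := (Dy k δ)^[j] f

def Sb (k : ℕ) (δ : ℝ) : Set (EE k) := {p | (∀ i, p.1 i ∈ Ioo (-δ) δ) ∧ p.2 = 0}

variable {k : ℕ} {δ : ℝ}

lemma boxQ_eq : boxQ k δ = (univ.pi fun _ : Fin k => Ioo (-δ) δ) ×ˢ Ico (0:ℝ) δ := by
  ext ⟨a, b⟩; simp [boxQ, Set.mem_pi]

lemma convex_boxQ : Convex ℝ (boxQ k δ) := by
  rw [boxQ_eq]; exact (convex_pi fun i _ => convex_Ioo _ _).prod (convex_Ico _ _)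

lemma interior_boxQ : interior (boxQ k δ) =
    (univ.pi fun _ : Fin k => Ioo (-δ) δ) ×ˢ Ioo (0:ℝ) δ := by
  rw [boxQ_eq, interior_prod_eq, interior_Ico,
    (isOpen_set_pi finite_univ fun _ _ => isOpen_Ioo).interior_eq]

lemma nonempty_interior_boxQ (hδ : 0 < δ) : (interior (boxQ k δ)).Nonempty := by
  refine ⟨(fun _ => 0, δ/2), ?_⟩
  rw [interior_boxQ]
  refine ⟨?_, by constructor <;> linarith⟩
  intro i _
  exact ⟨by linarith, hδ⟩

lemma uniqueDiffOn_boxQ (hδ : 0 < δ) : UniqueDiffOn ℝ (boxQ k δ) :=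
  uniqueDiffOn_convex convex_boxQ (nonempty_interior_boxQ hδ)

lemma mem_closure_interior_boxQ (hδ : 0 < δ) {p : EE k} (hp : p ∈ boxQ k δ) :
    p ∈ closure (interior (boxQ k δ)) := by
  rw [interior_boxQ, closure_prod_eq]
  refine ⟨subset_closure ?_, ?_⟩
  · intro i _; exact hp.1 i
  · rw [closure_Ioo (ne_of_lt hδ)]
    exact ⟨hp.2.1, hp.2.2.le⟩

lemma Sb_subset (hδ : 0 < δ) : Sb k δ ⊆ boxQ k δ := fun p hp =>
  ⟨hp.1, by rw [hp.2]; exact ⟨le_refl 0, hδ⟩⟩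

lemma vertical_tendsto (hδ : 0 < δ) {p₀ : EE k} (hp₀ : p₀ ∈ Sb k δ) :
    Tendsto (fun s : ℝ => ((p₀.1, s) : EE k)) (𝓝[>] (0:ℝ))
      (𝓝[{q : EE k | q ∈ boxQ k δ ∧ 0 < q.2}] p₀) := by
  rw [tendsto_nhdsWithin_iff]
  constructor
  · have h1 : Tendsto (fun s : ℝ => ((p₀.1, s) : EE k)) (𝓝 0) (𝓝 (p₀.1, 0)) :=
      (Continuous.prodMk_right p₀.1).tendsto 0
    have h2 : ((p₀.1, (0:ℝ)) : EE k) = p₀ := Prod.ext rfl hp₀.2.symm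
    rw [h2] at h1
    exact h1.mono_left nhdsWithin_le_nhds
  · filter_upwards [Ioo_mem_nhdsGT_of_mem (Set.left_mem_Ico.mpr hδ)] with s hs
    exact ⟨⟨fun i => hp₀.1 i, ⟨hs.1.le, hs.2⟩⟩, hs.1⟩

lemma eq_of_eqOn_pos (hδ : 0 < δ) {F G : EE k → ℝ} {p₀ : EE k} (hp₀ : p₀ ∈ Sb k δ)
    (hF : ContinuousWithinAt F (boxQ k δ) p₀) (hG : ContinuousWithinAt G (boxQ k δ) p₀)
    (h : ∀ p ∈ boxQ k δ, 0 < p.2 → F p = G p) : F p₀ = G p₀ := by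
  have hv := vertical_tendsto hδ hp₀
  have hvQ : Tendsto (fun s : ℝ => ((p₀.1, s) : EE k)) (𝓝[>] 0) (𝓝[boxQ k δ] p₀) :=
    hv.mono_right (nhdsWithin_mono _ (fun q hq => hq.1))
  have l1 : Tendsto (fun s : ℝ => F (p₀.1, s)) (𝓝[>] 0) (𝓝 (F p₀)) := hF.tendsto.comp hvQ
  have l2 : Tendsto (fun s : ℝ => G (p₀.1, s)) (𝓝[>] 0) (𝓝 (G p₀)) := hG.tendsto.comp hvQ
  have heq : (fun s : ℝ => F (p₀.1, s)) =ᶠ[𝓝[>] (0:ℝ)] (fun s => G (p₀.1, s)) := by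
    filter_upwards [Ioo_mem_nhdsGT_of_mem (Set.left_mem_Ico.mpr hδ)] with s hs
    exact h _ ⟨fun i => hp₀.1 i, ⟨hs.1.le, hs.2⟩⟩ hs.1
  exact tendsto_nhds_unique (l1.congr' heq) l2

lemma slice_hasDerivWithinAt {f : EE k → ℝ} {x' : Fin k → ℝ} {t : ℝ}
    (hx' : ∀ i, x' i ∈ Ioo (-δ) δ) (ht : t ∈ Ico 0 δ)
    (hf : DifferentiableWithinAt ℝ f (boxQ k δ) (x', t)) :
    HasDerivWithinAt (fun s => f (x', s)) (Dy k δ f (x', t)) (Ico 0 δ) t := by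
  have hγ : HasDerivWithinAt (fun s : ℝ => ((x', s) : EE k)) (((0 : Fin k → ℝ), (1:ℝ)) : EE k)
      (Ico 0 δ) t := ((hasDerivAt_const t x').prodMk (hasDerivAt_id t)).hasDerivWithinAt
  have hmaps : MapsTo (fun s : ℝ => ((x', s) : EE k)) (Ico 0 δ) (boxQ k δ) :=
    fun s hs => ⟨fun i => hx' i, hs⟩
  exact hf.hasFDerivWithinAt.comp_hasDerivWithinAt t hγ hmaps

lemma tangential_deriv_eq_zero (hδ : 0 < δ) {H : EE k → ℝ} {p₀ : EE k} (hp₀ : p₀ ∈ Sb k δ)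
    (hH : DifferentiableWithinAt ℝ H (boxQ k δ) p₀) (hz : ∀ p ∈ Sb k δ, H p = 0) (i : Fin k) :
    fderivWithin ℝ H (boxQ k δ) p₀ (Pi.single i 1, 0) = 0 := by
  set ε := δ - |p₀.1 i| with hε
  have hi := hp₀.1 i
  have habs : |p₀.1 i| < δ := abs_lt.mpr ⟨hi.1, hi.2⟩
  have hεpos : 0 < ε := by simp only [hε]; linarith
  set w : Fin k → ℝ := Pi.single i 1 with hw
  set γ : ℝ → EE k := fun s => (p₀.1 + s • w, 0) with hγdef
  have hγS : ∀ s ∈ Ioo (-ε) ε, γ s ∈ Sb k δ := by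
    intro s hs
    have h1 : |s| < ε := abs_lt.mpr ⟨hs.1, hs.2⟩
    refine ⟨?_, rfl⟩
    intro j
    by_cases hj : j = i
    · subst hj
      simp only [hγdef, hw, Pi.add_apply, Pi.smul_apply, Pi.single_eq_same, smul_eq_mul, mul_one]
      have h2 := abs_lt.mp h1
      have h3 := neg_abs_le (p₀.1 j)
      have h4 := le_abs_self (p₀.1 j)
      constructor
      · simp only [hε] at h2; linarith
      · simp only [hε] at h2; linarith
    · simpa [hγdef, hw, Pi.single_apply, hj] using hp₀.1 j
  have hγmaps : MapsTo γ (Ioo (-ε) ε) (boxQ k δ) := fun s hs => Sb_subset hδ (hγS s hs)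
  have hγ0 : γ 0 = p₀ := by
    simp only [hγdef, zero_smul, add_zero]
    exact Prod.ext rfl hp₀.2.symm
  have hγd : HasDerivWithinAt γ ((w, (0:ℝ)) : EE k) (Ioo (-ε) ε) 0 := by
    have h1 : HasDerivAt (fun s : ℝ => p₀.1 + s • w) w 0 := by
      simpa using ((hasDerivAt_id (0:ℝ)).smul_const w).const_add p₀.1
    exact ((h1.prodMk (hasDerivAt_const 0 (0:ℝ)))).hasDerivWithinAt
  have hH' : HasFDerivWithinAt H (fderivWithin ℝ H (boxQ k δ) p₀) (boxQ k δ) (γ 0) := by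
    rw [hγ0]; exact hH.hasFDerivWithinAt
  have hcomp : HasDerivWithinAt (H ∘ γ) (fderivWithin ℝ H (boxQ k δ) p₀ (w, 0))
      (Ioo (-ε) ε) 0 := hH'.comp_hasDerivWithinAt 0 hγd hγmaps
  have hzero : HasDerivWithinAt (H ∘ γ) 0 (Ioo (-ε) ε) 0 := by
    have h0 : HasDerivWithinAt (fun _ : ℝ => (0:ℝ)) 0 (Ioo (-ε) ε) 0 :=
      (hasDerivAt_const 0 (0:ℝ)).hasDerivWithinAt
    refine h0.congr (fun s hs => ?_) ?_
    · exact (hz _ (hγS s hs)).symm ▸ rfl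
    · show H (γ 0) = 0
      rw [hγ0]; exact hz _ hp₀
  have huniq : UniqueDiffWithinAt ℝ (Ioo (-ε) ε) 0 :=
    isOpen_Ioo.uniqueDiffWithinAt ⟨neg_lt_zero.mpr hεpos, hεpos⟩
  have e1 := hcomp.derivWithin huniq
  have e2 := hzero.derivWithin huniq
  rw [e1] at e2
  exact e2

section rules
variable (hδ : 0 < δ) {f g : EE k → ℝ} {p : EE k} {w : EE k}

lemma DyI_zero (f : EE k → ℝ) : DyI k δ 0 f = f := rfl
lemma DyI_succ (j : ℕ) (f : EE k → ℝ) : DyI k δ (j+1) f = DyI k δ j (Dy k δ f) :=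
  Function.iterate_succ_apply _ _ _
lemma DyI_succ' (j : ℕ) (f : EE k → ℝ) : DyI k δ (j+1) f = Dy k δ (DyI k δ j f) :=
  Function.iterate_succ_apply' _ _ _
lemma DyI_one (f : EE k → ℝ) : DyI k δ 1 f = Dy k δ f := rfl

include hδ

lemma Dw_add (hf : DifferentiableWithinAt ℝ f (boxQ k δ) p)
    (hg : DifferentiableWithinAt ℝ g (boxQ k δ) p) (hp : p ∈ boxQ k δ) :
    Dw k δ (fun q => f q + g q) w p = Dw k δ f w p + Dw k δ g w p := by
  unfold Dw
  rw [fderivWithin_fun_add (uniqueDiffOn_boxQ hδ p hp) hf hg]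
  rfl

lemma Dw_sub (hf : DifferentiableWithinAt ℝ f (boxQ k δ) p)
    (hg : DifferentiableWithinAt ℝ g (boxQ k δ) p) (hp : p ∈ boxQ k δ) :
    Dw k δ (fun q => f q - g q) w p = Dw k δ f w p - Dw k δ g w p := by
  unfold Dw
  rw [fderivWithin_fun_sub (uniqueDiffOn_boxQ hδ p hp) hf hg]
  rfl

lemma Dw_const (c : ℝ) (hp : p ∈ boxQ k δ) :
    Dw k δ (fun _ => c) w p = 0 := by
  unfold Dw
  rw [fderivWithin_const_apply c]
  rfl

lemma Dw_const_mul (hf : DifferentiableWithinAt ℝ f (boxQ k δ) p) (hp : p ∈ boxQ k δ) (c : ℝ) :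
    Dw k δ (fun q => c * f q) w p = c * Dw k δ f w p := by
  unfold Dw
  rw [fderivWithin_const_mul (uniqueDiffOn_boxQ hδ p hp) hf]
  rfl

lemma Dw_mul (hf : DifferentiableWithinAt ℝ f (boxQ k δ) p)
    (hg : DifferentiableWithinAt ℝ g (boxQ k δ) p) (hp : p ∈ boxQ k δ) :
    Dw k δ (fun q => f q * g q) w p = f p * Dw k δ g w p + g p * Dw k δ f w p := by
  unfold Dw
  rw [fderivWithin_fun_mul (uniqueDiffOn_boxQ hδ p hp) hf hg]
  simp [smul_eq_mul]

lemma Dw_sum {ι : Type*} (u : Finset ι) (F : ι → EE k → ℝ)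
    (hF : ∀ i ∈ u, DifferentiableWithinAt ℝ (F i) (boxQ k δ) p) (hp : p ∈ boxQ k δ) :
    Dw k δ (fun q => ∑ i ∈ u, F i q) w p = ∑ i ∈ u, Dw k δ (F i) w p := by
  unfold Dw
  rw [fderivWithin_fun_sum (uniqueDiffOn_boxQ hδ p hp) hF]
  simp

lemma Dw_snd (hp : p ∈ boxQ k δ) :
    Dw k δ (fun q => q.2) w p = w.2 := by
  unfold Dw
  rw [(hasFDerivAt_snd.hasFDerivWithinAt).fderivWithin (uniqueDiffOn_boxQ hδ p hp)]
  rfl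

end rules

lemma Dw_congr {f g : EE k → ℝ} (h : EqOn f g (boxQ k δ)) {w : EE k} :
    EqOn (Dw k δ f w) (Dw k δ g w) (boxQ k δ) := by
  intro p hp
  unfold Dw
  rw [fderivWithin_congr h (h hp)]

lemma DyI_congr {f g : EE k → ℝ} (h : EqOn f g (boxQ k δ)) (j : ℕ) :
    EqOn (DyI k δ j f) (DyI k δ j g) (boxQ k δ) := by
  induction j with
  | zero => exact h
  | succ j ih =>
    rw [DyI_succ', DyI_succ']
    exact Dw_congr ih

lemma CD_Dw (hδ : 0 < δ) {r : ℕ} {f : EE k → ℝ} (hf : ContDiffOn ℝ (r+1 : ℕ) f (boxQ k δ))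
    (w : EE k) : ContDiffOn ℝ (r : ℕ) (Dw k δ f w) (boxQ k δ) := by
  have h1 : ContDiffOn ℝ (r : ℕ) (fderivWithin ℝ f (boxQ k δ)) (boxQ k δ) := by
    apply hf.fderivWithin (uniqueDiffOn_boxQ hδ)
    norm_cast
  exact (ContinuousLinearMap.apply ℝ ℝ w).contDiff.comp_contDiffOn h1

lemma CD_DyI (hδ : 0 < δ) {r j : ℕ} {f : EE k → ℝ} (hf : ContDiffOn ℝ (r : ℕ) f (boxQ k δ))
    (hj : j ≤ r) : ContDiffOn ℝ ((r - j : ℕ)) (DyI k δ j f) (boxQ k δ) := by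
  induction j generalizing r f with
  | zero => simpa [DyI_zero] using hf
  | succ j ih =>
    rw [DyI_succ]
    have h1 : ContDiffOn ℝ ((r-1 : ℕ)) (Dy k δ f) (boxQ k δ) := by
      apply CD_Dw hδ
      have : r - 1 + 1 = r := by omega
      rw [this]; exact hf
    have := ih h1 (by omega)
    have he : r - 1 - j = r - (j+1) := by omega
    rwa [he] at this

lemma CD_diff (hδ : 0 < δ) {r : ℕ} {f : EE k → ℝ} (hf : ContDiffOn ℝ (r:ℕ) f (boxQ k δ))
    (hr : 1 ≤ r) {p : EE k} (hp : p ∈ boxQ k δ) :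
    DifferentiableWithinAt ℝ f (boxQ k δ) p :=
  (hf.differentiableOn (by exact_mod_cast (show r ≠ 0 by omega))) p hp

lemma CD_diff_DyI (hδ : 0 < δ) {r j : ℕ} {f : EE k → ℝ} (hf : ContDiffOn ℝ (r:ℕ) f (boxQ k δ))
    (hj : j + 1 ≤ r) {p : EE k} (hp : p ∈ boxQ k δ) :
    DifferentiableWithinAt ℝ (DyI k δ j f) (boxQ k δ) p :=
  CD_diff hδ (CD_DyI hδ hf (by omega)) (by omega) hp

lemma Dw_comm (hδ : 0 < δ) {r : ℕ} {f : EE k → ℝ} (hf : ContDiffOn ℝ (r:ℕ) f (boxQ k δ))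
    (hr : 2 ≤ r) {p : EE k} (hp : p ∈ boxQ k δ) (a b : EE k) :
    Dw k δ (Dw k δ f a) b p = Dw k δ (Dw k δ f b) a p := by
  have hQ := uniqueDiffOn_boxQ (k := k) hδ
  have hsym : IsSymmSndFDerivWithinAt ℝ f (boxQ k δ) p :=
    (hf p hp).isSymmSndFDerivWithinAt (by simp only [minSmoothness_of_isRCLikeNormedField]; exact_mod_cast hr) hQ
      (mem_closure_interior_boxQ hδ hp) hp
  have hc : DifferentiableWithinAt ℝ (fderivWithin ℝ f (boxQ k δ)) (boxQ k δ) p := by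
    have h1 : ContDiffOn ℝ (1:ℕ) (fderivWithin ℝ f (boxQ k δ)) (boxQ k δ) := by
      apply hf.fderivWithin hQ
      exact_mod_cast (by exact_mod_cast hr : (2:WithTop ℕ∞) ≤ r)
    exact (h1.differentiableOn (by norm_num)) p hp
  have key : ∀ c : EE k, ∀ d : EE k,
      Dw k δ (Dw k δ f c) d p = fderivWithin ℝ (fderivWithin ℝ f (boxQ k δ)) (boxQ k δ) p d c := by
    intro c d
    show fderivWithin ℝ (fun q => fderivWithin ℝ f (boxQ k δ) q c) (boxQ k δ) p d = _
    have : (fun q => fderivWithin ℝ f (boxQ k δ) q c)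
        = fun q => (fderivWithin ℝ f (boxQ k δ) q) ((fun _ => c) q) := rfl
    rw [this, fderivWithin_clm_apply (hQ p hp) hc (differentiableWithinAt_const c)]
    simp [fderivWithin_const_apply]
  rw [key a b, key b a]
  exact hsym.eq b a

lemma DyI_Dw_comm (hδ : 0 < δ) {j : ℕ} : ∀ {r : ℕ} {f : EE k → ℝ},
    ContDiffOn ℝ (r:ℕ) f (boxQ k δ) → j + 1 ≤ r → ∀ (a : EE k),
    EqOn (DyI k δ j (Dw k δ f a)) (Dw k δ (DyI k δ j f) a) (boxQ k δ) := by
  induction j with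
  | zero => intro r f hf hj a; exact fun p hp => rfl
  | succ j ih =>
    intro r f hf hj a p hp
    rw [DyI_succ]
    have h1 : EqOn (Dy k δ (Dw k δ f a)) (Dw k δ (Dy k δ f) a) (boxQ k δ) := by
      intro q hq
      exact Dw_comm hδ hf (by omega) hq a _
    have h2 := DyI_congr h1 j hp
    rw [h2]
    have h3 : ContDiffOn ℝ ((r-1 : ℕ)) (Dy k δ f) (boxQ k δ) := by
      apply CD_Dw hδ
      have : r - 1 + 1 = r := by omega
      rw [this]; exact hf
    have h4 := ih h3 (by omega) a hp
    rw [h4, ← DyI_succ]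

lemma DyI_sub (hδ : 0 < δ) {j : ℕ} : ∀ {r : ℕ} {f g : EE k → ℝ},
    ContDiffOn ℝ (r:ℕ) f (boxQ k δ) → ContDiffOn ℝ (r:ℕ) g (boxQ k δ) → j ≤ r →
    EqOn (DyI k δ j (fun q => f q - g q)) (fun q => DyI k δ j f q - DyI k δ j g q) (boxQ k δ) := by
  induction j with
  | zero => intro r f g _ _ _; exact fun p hp => rfl
  | succ j ih =>
    intro r f g hf hg hj p hp
    rw [DyI_succ]
    have h1 : EqOn (Dy k δ (fun q => f q - g q)) (fun q => Dy k δ f q - Dy k δ g q) (boxQ k δ) := by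
      intro q hq
      exact Dw_sub hδ (CD_diff hδ hf (by omega) hq) (CD_diff hδ hg (by omega) hq) hq
    rw [DyI_congr h1 j hp]
    have h3 : ContDiffOn ℝ ((r-1 : ℕ)) (Dy k δ f) (boxQ k δ) := by
      apply CD_Dw hδ; have : r - 1 + 1 = r := by omega
      rw [this]; exact hf
    have h4 : ContDiffOn ℝ ((r-1 : ℕ)) (Dy k δ g) (boxQ k δ) := by
      apply CD_Dw hδ; have : r - 1 + 1 = r := by omega
      rw [this]; exact hg
    have := ih h3 h4 (by omega) hp
    rw [this]
    show _ = DyI k δ (j+1) f p - DyI k δ (j+1) g p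
    rw [DyI_succ, DyI_succ]

lemma DyI_mul (hδ : 0 < δ) {j : ℕ} : ∀ {r : ℕ} {f g : EE k → ℝ},
    ContDiffOn ℝ (r:ℕ) f (boxQ k δ) → ContDiffOn ℝ (r:ℕ) g (boxQ k δ) → j ≤ r →
    ∀ p ∈ boxQ k δ, DyI k δ j (fun q => f q * g q) p
      = ∑ a ∈ Finset.range (j+1),
          (j.choose a : ℝ) * (DyI k δ a f p * DyI k δ (j - a) g p) := by
  induction j with
  | zero => intro r f g _ _ _ p hp; simp [DyI]
  | succ j ih =>
    intro r f g hf hg hj p hp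
    rw [DyI_succ']
    have hIH : EqOn (DyI k δ j (fun q => f q * g q))
        (fun q => ∑ a ∈ Finset.range (j+1),
          (j.choose a : ℝ) * (DyI k δ a f q * DyI k δ (j-a) g q)) (boxQ k δ) :=
      fun q hq => ih hf hg (by omega) q hq
    have h0 : Dy k δ (DyI k δ j fun q => f q * g q) p
        = Dy k δ (fun q => ∑ a ∈ Finset.range (j+1),
          (j.choose a : ℝ) * (DyI k δ a f q * DyI k δ (j-a) g q)) p := Dw_congr hIH hp
    rw [h0]
    have hdF : ∀ a ∈ Finset.range (j+1), DifferentiableWithinAt ℝ (DyI k δ a f) (boxQ k δ) p :=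
      fun a ha => CD_diff_DyI hδ hf (by have := Finset.mem_range.mp ha; omega) hp
    have hdG : ∀ a ∈ Finset.range (j+1),
        DifferentiableWithinAt ℝ (DyI k δ (j-a) g) (boxQ k δ) p :=
      fun a ha => CD_diff_DyI hδ hg (by have := Finset.mem_range.mp ha; omega) hp
    have hterm : ∀ a ∈ Finset.range (j+1), DifferentiableWithinAt ℝ
        (fun q => (j.choose a : ℝ) * (DyI k δ a f q * DyI k δ (j-a) g q)) (boxQ k δ) p :=
      fun a ha => (((hdF a ha).mul (hdG a ha)).const_mul _)
    have h0b : Dy k δ (fun q => ∑ a ∈ Finset.range (j+1),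
          (j.choose a : ℝ) * (DyI k δ a f q * DyI k δ (j-a) g q)) p
        = ∑ a ∈ Finset.range (j+1), Dw k δ
            (fun q => (j.choose a : ℝ) * (DyI k δ a f q * DyI k δ (j-a) g q))
            ((0 : Fin k → ℝ), (1:ℝ)) p := Dw_sum hδ _ _ hterm hp
    rw [h0b]
    have hexp : ∀ a ∈ Finset.range (j+1),
        Dw k δ (fun q => (j.choose a : ℝ) * (DyI k δ a f q * DyI k δ (j-a) g q))
          ((0 : Fin k → ℝ), (1:ℝ)) p
        = (j.choose a : ℝ) * (DyI k δ a f p * DyI k δ (j-a+1) g p)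
          + (j.choose a : ℝ) * (DyI k δ (a+1) f p * DyI k δ (j-a) g p) := by
      intro a ha
      rw [Dw_const_mul hδ (f := fun q => DyI k δ a f q * DyI k δ (j-a) g q) ((hdF a ha).mul (hdG a ha)) hp]
      rw [Dw_mul hδ (hdF a ha) (hdG a ha) hp]
      have e1 : Dw k δ (DyI k δ (j-a) g) ((0 : Fin k → ℝ), (1:ℝ)) p = DyI k δ (j-a+1) g p := by
        rw [DyI_succ']; rfl
      have e2 : Dw k δ (DyI k δ a f) ((0 : Fin k → ℝ), (1:ℝ)) p = DyI k δ (a+1) f p := by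
        rw [DyI_succ']; rfl
      rw [e1, e2]; ring
    rw [Finset.sum_congr rfl hexp, Finset.sum_add_distrib]
    -- now pure algebra with binomials
    set F : ℕ → ℝ := fun a => DyI k δ a f p with hF
    set G : ℕ → ℝ := fun b => DyI k δ b g p with hG
    set X : ℕ → ℝ := fun a => F a * G (j + 1 - a) with hX
    have key1 : ∑ a ∈ Finset.range (j+1), (j.choose a : ℝ) * (F a * G (j-a+1))
        = ∑ a ∈ Finset.range (j+1), (j.choose a : ℝ) * X a := by
      refine Finset.sum_congr rfl fun a ha => ?_
      have : j - a + 1 = j + 1 - a := by have := Finset.mem_range.mp ha; omega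
      rw [hX]; rw [this]
    have key2 : ∑ a ∈ Finset.range (j+1), (j.choose a : ℝ) * (F (a+1) * G (j-a))
        = ∑ a ∈ Finset.range (j+1), (j.choose a : ℝ) * X (a+1) := by
      refine Finset.sum_congr rfl fun a ha => ?_
      have : j - a = j + 1 - (a+1) := by omega
      rw [hX]; rw [this]
    rw [key1, key2]
    have e3 : ∑ b ∈ Finset.range (j+2), (j.choose b : ℝ) * X b
        = ∑ a ∈ Finset.range (j+1), (j.choose (a+1) : ℝ) * X (a+1) + (j.choose 0 : ℝ) * X 0 :=
      Finset.sum_range_succ' _ (j+1)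
    have e4 : ∑ b ∈ Finset.range (j+2), (j.choose b : ℝ) * X b
        = ∑ b ∈ Finset.range (j+1), (j.choose b : ℝ) * X b := by
      rw [Finset.sum_range_succ]
      simp [Nat.choose_succ_self]
    have e5 : ∑ a ∈ Finset.range (j+2), ((j+1).choose a : ℝ) * X a
        = ∑ a ∈ Finset.range (j+1), ((j+1).choose (a+1) : ℝ) * X (a+1)
          + ((j+1).choose 0 : ℝ) * X 0 :=
      Finset.sum_range_succ' _ (j+1)
    have e6 : ∀ a, (((j+1).choose (a+1) : ℕ) : ℝ) = (j.choose a : ℝ) + (j.choose (a+1) : ℝ) := by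
      intro a
      rw [Nat.choose_succ_succ]
      push_cast
      ring
    -- assemble
    have goal' : ∑ a ∈ Finset.range (j+1+1), ((j+1).choose a : ℝ) * (F a * G (j+1-a))
        = ∑ a ∈ Finset.range (j+1), (j.choose a : ℝ) * X a
          + ∑ a ∈ Finset.range (j+1), (j.choose a : ℝ) * X (a+1) := by
      have : ∑ a ∈ Finset.range (j+1+1), ((j+1).choose a : ℝ) * (F a * G (j+1-a))
          = ∑ a ∈ Finset.range (j+2), ((j+1).choose a : ℝ) * X a := rfl
      rw [this, e5]
      have : ∑ a ∈ Finset.range (j+1), ((j+1).choose (a+1) : ℝ) * X (a+1)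
          = ∑ a ∈ Finset.range (j+1), ((j.choose a : ℝ) * X (a+1) + (j.choose (a+1) : ℝ) * X (a+1)) := by
        refine Finset.sum_congr rfl fun a _ => ?_
        rw [e6]; ring
      rw [this, Finset.sum_add_distrib]
      have : ∑ a ∈ Finset.range (j+1), (j.choose (a+1) : ℝ) * X (a+1)
          = ∑ b ∈ Finset.range (j+1), (j.choose b : ℝ) * X b - (j.choose 0 : ℝ) * X 0 := by
        rw [← e4, e3]; ring
      rw [this]
      simp [Nat.choose_zero_right]
      try ring
    rw [goal']
    try ring



-- ############ new material ############

def goodTo (k : ℕ) (δ : ℝ) (r : ℕ) (F G : EE k → ℝ) : Prop :=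
  ∀ j ≤ r, ∀ p ∈ Sb k δ, DyI k δ j F p = DyI k δ j G p

lemma goodTo_of_le {r r' : ℕ} {F G : EE k → ℝ} (h : goodTo k δ r F G) (hr : r' ≤ r) :
    goodTo k δ r' F G := fun j hj => h j (le_trans hj hr)

lemma goodTo_shift {r : ℕ} {F G : EE k → ℝ} (h : goodTo k δ (r+1) F G) :
    goodTo k δ r (Dy k δ F) (Dy k δ G) := by
  intro j hj p hp
  rw [← DyI_succ, ← DyI_succ]
  exact h (j+1) (by omega) p hp

lemma DyI_const_zero (hδ : 0 < δ) (j : ℕ) :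
    ∀ (c : ℝ), ∀ p ∈ boxQ k δ, DyI k δ (j+1) (fun _ => c) p = 0 := by
  induction j with
  | zero => exact fun c p hp => Dw_const hδ c hp
  | succ j ih =>
    intro c p hp
    rw [DyI_succ]
    have h1 : EqOn (Dy k δ (fun _ : EE k => c)) (fun _ => (0:ℝ)) (boxQ k δ) :=
      fun q hq => Dw_const hδ c hq
    rw [DyI_congr h1 (j+1) hp]
    exact ih 0 p hp

lemma goodTo_Dwe (hδ : 0 < δ) {r r₀ : ℕ} {F G : EE k → ℝ}
    (hF : ContDiffOn ℝ (r₀:ℕ) F (boxQ k δ)) (hG : ContDiffOn ℝ (r₀:ℕ) G (boxQ k δ))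
    (h : goodTo k δ r F G) (hr : r + 1 ≤ r₀) (i : Fin k) :
    goodTo k δ r (Dw k δ F (Pi.single i 1, 0)) (Dw k δ G (Pi.single i 1, 0)) := by
  intro j hj p hp
  have hpQ : p ∈ boxQ k δ := Sb_subset hδ hp
  set H : EE k → ℝ := fun q => F q - G q with hH
  have hHC : ContDiffOn ℝ (r₀:ℕ) H (boxQ k δ) := hF.sub hG
  have e1 : EqOn (Dw k δ H (Pi.single i 1, 0))
      (fun q => Dw k δ F (Pi.single i 1, 0) q - Dw k δ G (Pi.single i 1, 0) q) (boxQ k δ) :=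
    fun q hq => Dw_sub hδ (CD_diff hδ hF (by omega) hq) (CD_diff hδ hG (by omega) hq) hq
  have hFe : ContDiffOn ℝ ((r₀-1:ℕ)) (Dw k δ F (Pi.single i 1, 0)) (boxQ k δ) := by
    apply CD_Dw hδ; have : r₀ - 1 + 1 = r₀ := by omega
    rw [this]; exact hF
  have hGe : ContDiffOn ℝ ((r₀-1:ℕ)) (Dw k δ G (Pi.single i 1, 0)) (boxQ k δ) := by
    apply CD_Dw hδ; have : r₀ - 1 + 1 = r₀ := by omega
    rw [this]; exact hG
  have e2 : DyI k δ j (Dw k δ H (Pi.single i 1, 0)) p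
      = DyI k δ j (Dw k δ F (Pi.single i 1, 0)) p - DyI k δ j (Dw k δ G (Pi.single i 1, 0)) p := by
    rw [DyI_congr e1 j hpQ]
    exact DyI_sub hδ hFe hGe (by omega) hpQ
  have e3 : DyI k δ j (Dw k δ H (Pi.single i 1, 0)) p = Dw k δ (DyI k δ j H) (Pi.single i 1, 0) p :=
    DyI_Dw_comm hδ hHC (by omega) _ hpQ
  have e4 : ∀ q ∈ Sb k δ, DyI k δ j H q = 0 := by
    intro q hq
    have hqQ := Sb_subset hδ hq
    have e4a := DyI_sub hδ hF hG (by omega : j ≤ r₀) hqQ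
    have : DyI k δ j H q = DyI k δ j F q - DyI k δ j G q := e4a
    rw [this, h j hj q hq, sub_self]
  have e5 : Dw k δ (DyI k δ j H) (Pi.single i 1, 0) p = 0 :=
    tangential_deriv_eq_zero hδ hp (CD_diff_DyI hδ hHC (by omega) hpQ) e4 i
  rw [e3, e5] at e2
  linarith [e2]

lemma goodTo_mul (hδ : 0 < δ) {r r₀ : ℕ} {F F' G G' : EE k → ℝ}
    (hF : ContDiffOn ℝ (r₀:ℕ) F (boxQ k δ)) (hF' : ContDiffOn ℝ (r₀:ℕ) F' (boxQ k δ))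
    (hG : ContDiffOn ℝ (r₀:ℕ) G (boxQ k δ)) (hG' : ContDiffOn ℝ (r₀:ℕ) G' (boxQ k δ))
    (hr : r ≤ r₀) (h1 : goodTo k δ r F F') (h2 : goodTo k δ r G G') :
    goodTo k δ r (fun q => F q * G q) (fun q => F' q * G' q) := by
  intro j hj p hp
  have hpQ := Sb_subset hδ hp
  rw [DyI_mul hδ hF hG (by omega) p hpQ, DyI_mul hδ hF' hG' (by omega) p hpQ]
  refine Finset.sum_congr rfl fun a ha => ?_
  have haj := Finset.mem_range.mp ha
  rw [h1 a (by omega) p hp, h2 (j-a) (by omega) p hp]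

lemma DyI_sum_eq (hδ : 0 < δ) {j : ℕ} : ∀ {r₀ : ℕ} {ι : Type} {u : Finset ι} {F : ι → EE k → ℝ},
    (∀ i ∈ u, ContDiffOn ℝ (r₀:ℕ) (F i) (boxQ k δ)) → j ≤ r₀ →
    EqOn (DyI k δ j (fun q => ∑ i ∈ u, F i q)) (fun q => ∑ i ∈ u, DyI k δ j (F i) q)
      (boxQ k δ) := by
  induction j with
  | zero => intro r₀ ι u F _ _ p hp; rfl
  | succ j ih =>
    intro r₀ ι u F hF hj p hp
    rw [DyI_succ]
    have h1 : EqOn (Dy k δ (fun q => ∑ i ∈ u, F i q)) (fun q => ∑ i ∈ u, Dy k δ (F i) q)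
        (boxQ k δ) := by
      intro q hq
      exact Dw_sum hδ u F (fun i hi => CD_diff hδ (hF i hi) (by omega) hq) hq
    rw [DyI_congr h1 j hp]
    have h2 : ∀ i ∈ u, ContDiffOn ℝ ((r₀-1:ℕ)) (Dy k δ (F i)) (boxQ k δ) := by
      intro i hi
      apply CD_Dw hδ; have : r₀ - 1 + 1 = r₀ := by omega
      rw [this]; exact hF i hi
    have h3 := ih h2 (by omega) hp
    rw [h3]
    show _ = ∑ i ∈ u, DyI k δ (j+1) (F i) p
    refine Finset.sum_congr rfl fun i _ => ?_
    rw [DyI_succ]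

lemma goodTo_sum (hδ : 0 < δ) {r r₀ : ℕ} {ι : Type} {u : Finset ι} {F G : ι → EE k → ℝ}
    (hF : ∀ i ∈ u, ContDiffOn ℝ (r₀:ℕ) (F i) (boxQ k δ))
    (hG : ∀ i ∈ u, ContDiffOn ℝ (r₀:ℕ) (G i) (boxQ k δ))
    (hr : r ≤ r₀) (h : ∀ i ∈ u, goodTo k δ r (F i) (G i)) :
    goodTo k δ r (fun q => ∑ i ∈ u, F i q) (fun q => ∑ i ∈ u, G i q) := by
  intro j hj p hp
  have hpQ := Sb_subset hδ hp
  rw [DyI_sum_eq hδ hF (by omega) hpQ, DyI_sum_eq hδ hG (by omega) hpQ]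
  exact Finset.sum_congr rfl fun i hi => h i hi j hj p hp

lemma goodTo_sub (hδ : 0 < δ) {r r₀ : ℕ} {F F' G G' : EE k → ℝ}
    (hF : ContDiffOn ℝ (r₀:ℕ) F (boxQ k δ)) (hF' : ContDiffOn ℝ (r₀:ℕ) F' (boxQ k δ))
    (hG : ContDiffOn ℝ (r₀:ℕ) G (boxQ k δ)) (hG' : ContDiffOn ℝ (r₀:ℕ) G' (boxQ k δ))
    (hr : r ≤ r₀) (h1 : goodTo k δ r F F') (h2 : goodTo k δ r G G') :
    goodTo k δ r (fun q => F q - G q) (fun q => F' q - G' q) := by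
  intro j hj p hp
  have hpQ := Sb_subset hδ hp
  rw [DyI_sub hδ hF hG (by omega) hpQ, DyI_sub hδ hF' hG' (by omega) hpQ]
  show DyI k δ j F p - DyI k δ j G p = DyI k δ j F' p - DyI k δ j G' p
  rw [h1 j hj p hp, h2 j hj p hp]

lemma goodTo_recip (hδ : 0 < δ) {r r₀ : ℕ} {W W' : EE k → ℝ}
    (hW : ContDiffOn ℝ (r₀:ℕ) W (boxQ k δ)) (hW' : ContDiffOn ℝ (r₀:ℕ) W' (boxQ k δ))
    (hr : r ≤ r₀)
    (hne : ∀ p ∈ boxQ k δ, W p ≠ 0) (hne' : ∀ p ∈ boxQ k δ, W' p ≠ 0)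
    (h : goodTo k δ r W W') :
    goodTo k δ r (fun q => (W q)⁻¹) (fun q => (W' q)⁻¹) := by
  have key : ∀ (V : EE k → ℝ), ContDiffOn ℝ (r₀:ℕ) V (boxQ k δ) → (∀ p ∈ boxQ k δ, V p ≠ 0) →
      ∀ j, 1 ≤ j → j ≤ r₀ → ∀ p ∈ boxQ k δ,
      ∑ a ∈ Finset.range (j+1),
        (j.choose a : ℝ) * (DyI k δ a V p * DyI k δ (j-a) (fun q => (V q)⁻¹) p) = 0 := by
    intro V hV hVne j hj1 hjr p hp
    have hv : ContDiffOn ℝ (r₀:ℕ) (fun q => (V q)⁻¹) (boxQ k δ) := hV.inv hVne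
    have e1 := DyI_mul hδ hV hv hjr p hp
    rw [← e1]
    have e2 : EqOn (fun q => V q * (V q)⁻¹) (fun _ => (1:ℝ)) (boxQ k δ) :=
      fun q hq => mul_inv_cancel₀ (hVne q hq)
    rw [DyI_congr e2 j hp]
    obtain ⟨j', rfl⟩ : ∃ j', j = j' + 1 := ⟨j - 1, by omega⟩
    exact DyI_const_zero hδ j' 1 p hp
  intro j
  induction j using Nat.strong_induction_on with
  | _ j ih =>
    intro hj p hp
    have hpQ := Sb_subset hδ hp
    rcases Nat.eq_zero_or_pos j with h0 | hpos
    · subst h0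
      show (W p)⁻¹ = (W' p)⁻¹
      have := h 0 (by omega) p hp
      have hWW : W p = W' p := this
      rw [hWW]
    · have k1 := key W hW hne j hpos (by omega) p hpQ
      have k2 := key W' hW' hne' j hpos (by omega) p hpQ
      obtain ⟨j', rfl⟩ : ∃ j', j = j' + 1 := ⟨j - 1, by omega⟩
      rw [Finset.sum_range_succ'] at k1 k2
      have hrest : ∑ a ∈ Finset.range (j'+1),
          ((j'+1).choose (a+1) : ℝ) * (DyI k δ (a+1) W p * DyI k δ (j'+1-(a+1)) (fun q => (W q)⁻¹) p)
          = ∑ a ∈ Finset.range (j'+1),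
          ((j'+1).choose (a+1) : ℝ) * (DyI k δ (a+1) W' p * DyI k δ (j'+1-(a+1)) (fun q => (W' q)⁻¹) p) := by
        refine Finset.sum_congr rfl fun a ha => ?_
        have haj := Finset.mem_range.mp ha
        rw [h (a+1) (by omega) p hp]
        rw [ih (j'+1-(a+1)) (by omega) (by omega) p hp]
      have hW0 : W p = W' p := h 0 (by omega) p hp
      have e0 : (((j'+1).choose 0 : ℕ) : ℝ) = 1 := by norm_num
      have k1' : W p * DyI k δ (j'+1) (fun q => (W q)⁻¹) p
          = - ∑ a ∈ Finset.range (j'+1),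
            ((j'+1).choose (a+1) : ℝ) * (DyI k δ (a+1) W p * DyI k δ (j'+1-(a+1)) (fun q => (W q)⁻¹) p) := by
        have : DyI k δ 0 W p = W p := rfl
        rw [e0] at k1
        simp only [Nat.sub_zero, one_mul] at k1
        rw [this] at k1
        linarith [k1]
      have k2' : W' p * DyI k δ (j'+1) (fun q => (W' q)⁻¹) p
          = - ∑ a ∈ Finset.range (j'+1),
            ((j'+1).choose (a+1) : ℝ) * (DyI k δ (a+1) W' p * DyI k δ (j'+1-(a+1)) (fun q => (W' q)⁻¹) p) := by
        have : DyI k δ 0 W' p = W' p := rfl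
        rw [e0] at k2
        simp only [Nat.sub_zero, one_mul] at k2
        rw [this] at k2
        linarith [k2]
      have keyeq : W p * DyI k δ (j'+1) (fun q => (W q)⁻¹) p
          = W p * DyI k δ (j'+1) (fun q => (W' q)⁻¹) p := by
        rw [k1']
        rw [hrest]
        rw [← k2']
        rw [hW0]
      exact mul_left_cancel₀ (hne p hpQ) keyeq



lemma qpos_mem_nhdsWithin {p : EE k} (hp : p ∈ boxQ k δ) (h2 : 0 < p.2) :
    {q : EE k | q ∈ boxQ k δ ∧ 0 < q.2} ∈ 𝓝[boxQ k δ] p := by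
  have h1 : {q : EE k | 0 < q.2} ∈ 𝓝 p :=
    (isOpen_lt continuous_const continuous_snd).mem_nhds h2
  exact inter_mem self_mem_nhdsWithin (mem_nhdsWithin_of_mem_nhds h1)

lemma uniqueDiffOn_Ico' (hδ : 0 < δ) : UniqueDiffOn ℝ (Ico (0:ℝ) δ) :=
  uniqueDiffOn_Ico 0 δ

lemma iteratedDerivWithin_slice (hδ : 0 < δ) {r : ℕ} {f : EE k → ℝ}
    (hf : ContDiffOn ℝ (r:ℕ) f (boxQ k δ)) {x' : Fin k → ℝ} (hx' : ∀ i, x' i ∈ Ioo (-δ) δ) :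
    ∀ j, j ≤ r → ∀ s ∈ Ico (0:ℝ) δ,
      iteratedDerivWithin j (fun t => f (x', t)) (Ico 0 δ) s = DyI k δ j f (x', s) := by
  intro j
  induction j with
  | zero => intro _ s hs; simp [DyI]
  | succ j ih =>
    intro hj s hs
    have huI : UniqueDiffOn ℝ (Ico (0:ℝ) δ) := uniqueDiffOn_Ico 0 δ
    rw [iteratedDerivWithin_succ]
    have hEq : EqOn (iteratedDerivWithin j (fun t => f (x', t)) (Ico 0 δ))
        (fun t => DyI k δ j f (x', t)) (Ico 0 δ) :=
      fun t ht => ih (by omega) t ht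
    rw [derivWithin_congr hEq (hEq hs)]
    have hd : DifferentiableWithinAt ℝ (DyI k δ j f) (boxQ k δ) (x', s) :=
      CD_diff_DyI hδ hf (by omega) ⟨fun i => hx' i, hs⟩
    have hder := slice_hasDerivWithinAt hx' hs hd
    rw [hder.derivWithin (huI s hs)]
    rw [DyI_succ']



-- ######## PDE layer ########

noncomputable def Wfun (k : ℕ) (δ : ℝ) (u : EE k → ℝ) : EE k → ℝ := fun p =>
  1 + ∑ j : Fin k ⊕ Unit, (Dw k δ u (dirVec k j) p) ^ 2

noncomputable def Nfun (k : ℕ) (δ : ℝ) (u : EE k → ℝ) : EE k → ℝ := fun p =>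
  ∑ j : Fin k ⊕ Unit, ∑ l : Fin k ⊕ Unit,
    Dw k δ u (dirVec k j) p * Dw k δ u (dirVec k l) p
      * Dw k δ (Dw k δ u (dirVec k l)) (dirVec k j) p

noncomputable def Tfun (k : ℕ) (δ : ℝ) (u : EE k → ℝ) : EE k → ℝ := fun p =>
  ∑ i : Fin k, Dw k δ (Dw k δ u (dirVec k (Sum.inl i))) (dirVec k (Sum.inl i)) p

noncomputable def Gfun (k : ℕ) (δ : ℝ) (u : EE k → ℝ) : EE k → ℝ := fun p =>
  Nfun k δ u p / Wfun k δ u p - Tfun k δ u p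

def PDE (k : ℕ) (δ : ℝ) (c : ℝ) (u : EE k → ℝ) : Prop :=
  ∀ p ∈ boxQ k δ, 0 < p.2 →
    p.2 * DyI k δ 2 u p + (0 - c) * DyI k δ 1 u p = p.2 * Gfun k δ u p

lemma Wfun_pos {k : ℕ} {δ : ℝ} {u : EE k → ℝ} (p : EE k) : 0 < Wfun k δ u p := by
  have h : 0 ≤ ∑ j : Fin k ⊕ Unit, (Dw k δ u (dirVec k j) p) ^ 2 :=
    Finset.sum_nonneg fun j _ => sq_nonneg _
  unfold Wfun; linarith

lemma Wfun_ne {k : ℕ} {δ : ℝ} {u : EE k → ℝ} (p : EE k) : Wfun k δ u p ≠ 0 :=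
  ne_of_gt (Wfun_pos p)

lemma CD_Dw' (hδ : 0 < δ) {r : ℕ} {f : EE k → ℝ} (hf : ContDiffOn ℝ (r:ℕ) f (boxQ k δ))
    (hr : 1 ≤ r) (w : EE k) : ContDiffOn ℝ ((r-1:ℕ)) (Dw k δ f w) (boxQ k δ) := by
  apply CD_Dw hδ
  have : r - 1 + 1 = r := by omega
  rw [this]; exact hf

lemma cast_le_cast {a b : ℕ} (h : a ≤ b) : ((a:ℕ) : WithTop ℕ∞) ≤ ((b:ℕ) : WithTop ℕ∞) := by
  exact_mod_cast h

lemma CD_Wfun (hδ : 0 < δ) {m : ℕ} {u : EE k → ℝ} (hu : ContDiffOn ℝ (m:ℕ) u (boxQ k δ))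
    (hm : 2 ≤ m) : ContDiffOn ℝ ((m-2:ℕ)) (Wfun k δ u) (boxQ k δ) := by
  apply ContDiffOn.add contDiffOn_const
  apply ContDiffOn.sum
  intro j _
  exact ((CD_Dw' hδ hu (by omega) (dirVec k j)).of_le (cast_le_cast (by omega))).pow 2

lemma CD_Nfun (hδ : 0 < δ) {m : ℕ} {u : EE k → ℝ} (hu : ContDiffOn ℝ (m:ℕ) u (boxQ k δ))
    (hm : 2 ≤ m) : ContDiffOn ℝ ((m-2:ℕ)) (Nfun k δ u) (boxQ k δ) := by
  apply ContDiffOn.sum; intro j _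
  apply ContDiffOn.sum; intro l _
  have h1 := (CD_Dw' hδ hu (by omega) (dirVec k j)).of_le
    (cast_le_cast (show m-2 ≤ m-1 by omega))
  have h2 := (CD_Dw' hδ hu (by omega) (dirVec k l)).of_le
    (cast_le_cast (show m-2 ≤ m-1 by omega))
  have h3 : ContDiffOn ℝ ((m-2:ℕ)) (Dw k δ (Dw k δ u (dirVec k l)) (dirVec k j)) (boxQ k δ) := by
    have := CD_Dw' hδ (CD_Dw' hδ hu (by omega) (dirVec k l)) (by omega) (dirVec k j)
    have he : m - 1 - 1 = m - 2 := by omega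
    rwa [he] at this
  exact (h1.mul h2).mul h3

lemma CD_Tfun (hδ : 0 < δ) {m : ℕ} {u : EE k → ℝ} (hu : ContDiffOn ℝ (m:ℕ) u (boxQ k δ))
    (hm : 2 ≤ m) : ContDiffOn ℝ ((m-2:ℕ)) (Tfun k δ u) (boxQ k δ) := by
  apply ContDiffOn.sum; intro i _
  have := CD_Dw' hδ (CD_Dw' hδ hu (by omega) (dirVec k (Sum.inl i))) (by omega)
    (dirVec k (Sum.inl i))
  have he : m - 1 - 1 = m - 2 := by omega
  rwa [he] at this

lemma CD_Gfun (hδ : 0 < δ) {m : ℕ} {u : EE k → ℝ} (hu : ContDiffOn ℝ (m:ℕ) u (boxQ k δ))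
    (hm : 2 ≤ m) : ContDiffOn ℝ ((m-2:ℕ)) (Gfun k δ u) (boxQ k δ) := by
  exact ((CD_Nfun hδ hu hm).div (CD_Wfun hδ hu hm) (fun p _ => Wfun_ne p)).sub
    (CD_Tfun hδ hu hm)

lemma pde_of_min {n : ℕ} {δ' : ℝ} (hδ : 0 < δ') {u : EE (n-1) → ℝ}
    (h : IsHypMinimalGraph n δ' u) : PDE (n-1) δ' (n:ℝ) u := by
  intro p hp hpos
  have e := h p hp hpos
  have hy : p.2 ≠ 0 := ne_of_gt hpos
  have hsplit : (∑ j : Fin (n - 1) ⊕ Unit,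
      d2Within (boxQ (n - 1) δ') u (dirVec (n - 1) j) (dirVec (n - 1) j) p)
      = Tfun (n-1) δ' u p + Dw (n-1) δ' (Dw (n-1) δ' u ((0 : Fin (n-1) → ℝ), (1:ℝ)))
          ((0 : Fin (n-1) → ℝ), (1:ℝ)) p := by
    rw [Fintype.sum_sum_type]
    rw [Fintype.sum_unique (fun a₂ : Unit => d2Within (boxQ (n - 1) δ') u
      (dirVec (n - 1) (Sum.inr a₂)) (dirVec (n - 1) (Sum.inr a₂)) p)]
    rfl
  rw [hsplit] at e
  have hN : (∑ j : Fin (n - 1) ⊕ Unit, ∑ l : Fin (n - 1) ⊕ Unit,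
      dWithin (boxQ (n - 1) δ') u (dirVec (n - 1) j) p
        * dWithin (boxQ (n - 1) δ') u (dirVec (n - 1) l) p
        * d2Within (boxQ (n - 1) δ') u (dirVec (n - 1) j) (dirVec (n - 1) l) p)
      = Nfun (n-1) δ' u p := rfl
  have hW : (1 + ∑ j : Fin (n - 1) ⊕ Unit,
      (dWithin (boxQ (n - 1) δ') u (dirVec (n - 1) j) p) ^ 2) = Wfun (n-1) δ' u p := rfl
  rw [hN, hW] at e
  have hD1 : dWithin (boxQ (n - 1) δ') u (dirVec (n - 1) (Sum.inr ())) p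
      = DyI (n-1) δ' 1 u p := rfl
  rw [hD1] at e
  have hA : DyI (n-1) δ' 2 u p
      = Dw (n-1) δ' (Dw (n-1) δ' u ((0 : Fin (n-1) → ℝ), (1:ℝ)))
          ((0 : Fin (n-1) → ℝ), (1:ℝ)) p := rfl
  have hGG : Gfun (n-1) δ' u p = Nfun (n-1) δ' u p / Wfun (n-1) δ' u p - Tfun (n-1) δ' u p := rfl
  rw [hA, hGG]
  have hc : (n:ℝ) = (n:ℝ)/p.2*p.2 := (div_mul_cancel₀ _ hy).symm
  rw [hc]
  linear_combination p.2 * e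


-- ######## Star induction ########

lemma star (hδ : 0 < δ) {m : ℕ} {c : ℝ} {u : EE k → ℝ}
    (hu : ContDiffOn ℝ (m:ℕ) u (boxQ k δ)) (hm2 : 2 ≤ m)
    (hG : ContDiffOn ℝ ((m-2:ℕ)) (Gfun k δ u) (boxQ k δ))
    (hpde : PDE k δ c u) :
    ∀ K, K ≤ m - 2 → ∀ p ∈ boxQ k δ, 0 < p.2 →
      p.2 * DyI k δ (K+2) u p + ((K:ℝ) - c) * DyI k δ (K+1) u p
        = p.2 * DyI k δ K (Gfun k δ u) p + (K:ℝ) * DyI k δ (K-1) (Gfun k δ u) p := by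
  intro K
  induction K with
  | zero =>
    intro _ p hp hpos
    have h := hpde p hp hpos
    simpa [DyI_zero] using h
  | succ K ih =>
    intro hK p hp hpos
    set G := Gfun k δ u with hGdef
    set L : EE k → ℝ :=
      fun q => q.2 * DyI k δ (K+2) u q + ((K:ℝ) - c) * DyI k δ (K+1) u q with hL
    set R : EE k → ℝ :=
      fun q => q.2 * DyI k δ K G q + (K:ℝ) * DyI k δ (K-1) G q with hR
    have hIH : ∀ q ∈ boxQ k δ, 0 < q.2 → L q = R q := fun q hq hq2 => ih (by omega) q hq hq2
    have hEv : L =ᶠ[𝓝[boxQ k δ] p] R := by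
      filter_upwards [qpos_mem_nhdsWithin hp hpos] with q hq
      exact hIH q hq.1 hq.2
    have hfd : fderivWithin ℝ L (boxQ k δ) p = fderivWithin ℝ R (boxQ k δ) p :=
      hEv.fderivWithin_eq (hIH p hp hpos)
    have hDyLR : Dy k δ L p = Dy k δ R p := by
      show fderivWithin ℝ L (boxQ k δ) p _ = fderivWithin ℝ R (boxQ k δ) p _
      rw [hfd]
    -- differentiability facts
    have hsnd : DifferentiableWithinAt ℝ (fun q : EE k => q.2) (boxQ k δ) p :=
      (differentiable_snd.differentiableAt).differentiableWithinAt
    have hA : DifferentiableWithinAt ℝ (DyI k δ (K+2) u) (boxQ k δ) p :=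
      CD_diff_DyI hδ hu (by omega) hp
    have hB : DifferentiableWithinAt ℝ (DyI k δ (K+1) u) (boxQ k δ) p :=
      CD_diff_DyI hδ hu (by omega) hp
    have hGK : DifferentiableWithinAt ℝ (DyI k δ K G) (boxQ k δ) p :=
      CD_diff_DyI hδ hG (by omega) hp
    have hGK1 : DifferentiableWithinAt ℝ (DyI k δ (K-1) G) (boxQ k δ) p :=
      CD_diff_DyI hδ hG (by omega) hp
    -- expand L
    have eL : Dy k δ L p = p.2 * DyI k δ (K+3) u p + DyI k δ (K+2) u p
        + ((K:ℝ) - c) * DyI k δ (K+2) u p := by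
      have e1 : Dy k δ L p
          = Dy k δ (fun q => q.2 * DyI k δ (K+2) u q) p
            + Dy k δ (fun q => ((K:ℝ) - c) * DyI k δ (K+1) u q) p :=
        Dw_add hδ (hsnd.mul hA) (hB.const_mul _) hp
      have e2 : Dy k δ (fun q => q.2 * DyI k δ (K+2) u q) p
          = p.2 * Dy k δ (DyI k δ (K+2) u) p + DyI k δ (K+2) u p * 1 := by
        have h := Dw_mul hδ (f := fun q : EE k => q.2) (g := DyI k δ (K+2) u)
          (w := ((0:Fin k → ℝ), (1:ℝ))) hsnd hA hp
        rw [Dw_snd hδ hp] at h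
        exact h
      have e3 : Dy k δ (fun q => ((K:ℝ) - c) * DyI k δ (K+1) u q) p
          = ((K:ℝ) - c) * Dy k δ (DyI k δ (K+1) u) p := Dw_const_mul hδ hB hp _
      rw [e1, e2, e3, ← DyI_succ', ← DyI_succ']
      ring
    -- expand R
    have eR : Dy k δ R p = p.2 * DyI k δ (K+1) G p + DyI k δ K G p
        + (K:ℝ) * DyI k δ K G p := by
      have e1 : Dy k δ R p
          = Dy k δ (fun q => q.2 * DyI k δ K G q) p
            + Dy k δ (fun q => (K:ℝ) * DyI k δ (K-1) G q) p :=
        Dw_add hδ (hsnd.mul hGK) (hGK1.const_mul _) hp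
      have e2 : Dy k δ (fun q => q.2 * DyI k δ K G q) p
          = p.2 * Dy k δ (DyI k δ K G) p + DyI k δ K G p * 1 := by
        have h := Dw_mul hδ (f := fun q : EE k => q.2) (g := DyI k δ K G)
          (w := ((0:Fin k → ℝ), (1:ℝ))) hsnd hGK hp
        rw [Dw_snd hδ hp] at h
        exact h
      have e3 : Dy k δ (fun q => (K:ℝ) * DyI k δ (K-1) G q) p
          = (K:ℝ) * Dy k δ (DyI k δ (K-1) G) p := Dw_const_mul hδ hGK1 hp _
      have e4 : (K:ℝ) * Dy k δ (DyI k δ (K-1) G) p = (K:ℝ) * DyI k δ K G p := by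
        rcases Nat.eq_zero_or_pos K with h0 | hposK
        · subst h0; simp
        · have : K - 1 + 1 = K := by omega
          rw [← DyI_succ', this]
      rw [e1, e2, e3, e4, ← DyI_succ']
      ring
    -- combine
    rw [eL, eR] at hDyLR
    push_cast
    linarith [hDyLR]


-- ######## Limit lemmas ########

lemma contWithinAt_DyI (hδ : 0 < δ) {r j : ℕ} {f : EE k → ℝ}
    (hf : ContDiffOn ℝ (r:ℕ) f (boxQ k δ)) (hj : j ≤ r) {p : EE k} (hp : p ∈ boxQ k δ) :
    ContinuousWithinAt (DyI k δ j f) (boxQ k δ) p :=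
  ((CD_DyI hδ hf hj).continuousOn) p hp

lemma limit0 (hδ : 0 < δ) {m : ℕ} {c : ℝ} {u : EE k → ℝ}
    (hu : ContDiffOn ℝ (m:ℕ) u (boxQ k δ)) (hm2 : 2 ≤ m)
    (hG : ContDiffOn ℝ ((m-2:ℕ)) (Gfun k δ u) (boxQ k δ))
    (hpde : PDE k δ c u) :
    ∀ K, K ≤ m - 2 → ∀ p₀ ∈ Sb k δ,
      ((K:ℝ) - c) * DyI k δ (K+1) u p₀ = (K:ℝ) * DyI k δ (K-1) (Gfun k δ u) p₀ := by
  intro K hK p₀ hp₀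
  have hp₀Q := Sb_subset hδ hp₀
  have hcsnd : ContinuousWithinAt (fun q : EE k => q.2) (boxQ k δ) p₀ :=
    (continuous_snd.continuousAt).continuousWithinAt
  have hFc : ContinuousWithinAt
      (fun q => q.2 * DyI k δ (K+2) u q + ((K:ℝ) - c) * DyI k δ (K+1) u q) (boxQ k δ) p₀ :=
    (hcsnd.mul (contWithinAt_DyI (j := K+2) hδ hu (by omega) hp₀Q)).add
      ((contWithinAt_DyI (j := K+1) hδ hu (by omega) hp₀Q).const_mul _)
  have hGc : ContinuousWithinAt
      (fun q => q.2 * DyI k δ K (Gfun k δ u) q + (K:ℝ) * DyI k δ (K-1) (Gfun k δ u) q)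
      (boxQ k δ) p₀ :=
    (hcsnd.mul (contWithinAt_DyI (j := K) hδ hG (by omega) hp₀Q)).add
      ((contWithinAt_DyI (j := K-1) hδ hG (by omega) hp₀Q).const_mul _)
  have h := eq_of_eqOn_pos hδ hp₀ hFc hGc
    (fun p hp hpos => star hδ hu hm2 hG hpde K hK p hp hpos)
  rw [hp₀.2] at h
  simpa using h

lemma vertical_tendsto' (hδ : 0 < δ) {p₀ : EE k} (hp₀ : p₀ ∈ Sb k δ) :
    Tendsto (fun s : ℝ => ((p₀.1, s) : EE k)) (𝓝[Ioo (0:ℝ) δ] (0:ℝ)) (𝓝[boxQ k δ] p₀) :=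
  ((vertical_tendsto hδ hp₀).mono_left
      (nhdsWithin_mono _ Ioo_subset_Ioi_self)).mono_right
    (nhdsWithin_mono _ (fun q hq => hq.1))

lemma nebot_Ioo (hδ : 0 < δ) : (𝓝[Ioo (0:ℝ) δ] (0:ℝ)).NeBot := by
  apply mem_closure_iff_nhdsWithin_neBot.mp
  rw [closure_Ioo (ne_of_lt hδ)]
  exact left_mem_Icc.mpr hδ.le

lemma limit_top (hδ : 0 < δ) {m : ℕ} {c : ℝ} {u : EE k → ℝ}
    (hu : ContDiffOn ℝ (m:ℕ) u (boxQ k δ)) (hm2 : 2 ≤ m)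
    (hG : ContDiffOn ℝ ((m-2:ℕ)) (Gfun k δ u) (boxQ k δ))
    (hpde : PDE k δ c u) :
    ∀ p₀ ∈ Sb k δ, (((m-1:ℕ):ℝ) - c) * DyI k δ m u p₀
      = ((m-1:ℕ):ℝ) * DyI k δ (m-2) (Gfun k δ u) p₀ := by
  intro p₀ hp₀
  obtain ⟨x', y⟩ := p₀
  have hy0 : y = 0 := hp₀.2
  subst hy0
  have hx' : ∀ i, x' i ∈ Ioo (-δ) δ := hp₀.1
  have hp₀Q : ((x', (0:ℝ)) : EE k) ∈ boxQ k δ := Sb_subset hδ hp₀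
  set Gf := Gfun k δ u with hGf
  set l := 𝓝[Ioo (0:ℝ) δ] (0:ℝ) with hl
  haveI : l.NeBot := nebot_Ioo hδ
  have hTQ : Tendsto (fun s : ℝ => ((x', s) : EE k)) l (𝓝[boxQ k δ] (x', (0:ℝ))) :=
    vertical_tendsto' hδ hp₀
  set C2 : ℝ := ((m-2:ℕ):ℝ) with hC2
  set a : EE k → ℝ := DyI k δ (m-1) u with ha
  set b : EE k → ℝ := DyI k δ (m-3) Gf with hb
  set g2 : EE k → ℝ := DyI k δ (m-2) Gf with hg2
  set Dym : EE k → ℝ := DyI k δ m u with hDym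
  -- derivative of the slice of a
  have hφd : HasDerivWithinAt (fun s => a (x', s)) (Dym (x', 0)) (Ico 0 δ) 0 := by
    have hd : DifferentiableWithinAt ℝ a (boxQ k δ) (x', 0) :=
      CD_diff_DyI hδ hu (by omega) hp₀Q
    have h1 := slice_hasDerivWithinAt hx' (left_mem_Ico.mpr hδ) hd
    have he : Dy k δ a (x', 0) = Dym (x', 0) := by
      rw [ha, hDym, ← DyI_succ']
      congr 1
      omega
    rwa [he] at h1
  have hslφ : Tendsto (fun s => (a (x', s) - a (x', 0)) / s) l (𝓝 (Dym (x', 0))) := by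
    have h1 := hasDerivWithinAt_iff_tendsto_slope.mp hφd
    have h2 : Tendsto (slope (fun s => a (x', s)) 0) l (𝓝 (Dym (x', 0))) := by
      apply h1.mono_left
      apply nhdsWithin_mono
      intro s hs
      exact ⟨⟨hs.1.le, hs.2⟩, ne_of_gt hs.1⟩
    apply h2.congr
    intro s
    rw [slope_def_field, sub_zero]
  have hψterm : Tendsto (fun s => C2 * ((b (x', s) - b (x', 0)) / s)) l
      (𝓝 (C2 * g2 (x', 0))) := by
    rcases Nat.lt_or_ge m 3 with hm3 | hm3
    · have h0 : C2 = 0 := by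
        rw [hC2]
        have : m - 2 = 0 := by omega
        rw [this]; simp
      rw [h0]
      simpa using (tendsto_const_nhds : Tendsto (fun _ : ℝ => (0:ℝ)) l (𝓝 0))
    · have hψd : HasDerivWithinAt (fun s => b (x', s)) (g2 (x', 0)) (Ico 0 δ) 0 := by
        have hd : DifferentiableWithinAt ℝ b (boxQ k δ) (x', 0) :=
          CD_diff_DyI hδ hG (by omega) hp₀Q
        have h1 := slice_hasDerivWithinAt hx' (left_mem_Ico.mpr hδ) hd
        have he : Dy k δ b (x', 0) = g2 (x', 0) := by
          rw [hb, hg2, ← DyI_succ']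
          congr 1
          omega
        rwa [he] at h1
      have h2 : Tendsto (slope (fun s => b (x', s)) 0) l (𝓝 (g2 (x', 0))) := by
        apply (hasDerivWithinAt_iff_tendsto_slope.mp hψd).mono_left
        apply nhdsWithin_mono
        intro s hs
        exact ⟨⟨hs.1.le, hs.2⟩, ne_of_gt hs.1⟩
      have h3 : Tendsto (fun s => (b (x', s) - b (x', 0)) / s) l (𝓝 (g2 (x', 0))) := by
        apply h2.congr
        intro s
        rw [slope_def_field, sub_zero]
      exact h3.const_mul _
  have hT1 : Tendsto (fun s : ℝ => Dym (x', s)) l (𝓝 (Dym (x', 0))) :=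
    (contWithinAt_DyI hδ hu (le_refl m) hp₀Q).tendsto.comp hTQ
  have hT2 : Tendsto (fun s : ℝ => g2 (x', s)) l (𝓝 (g2 (x', 0))) :=
    (contWithinAt_DyI hδ hG (le_refl (m-2)) hp₀Q).tendsto.comp hTQ
  have hE0 := limit0 hδ hu hm2 hG hpde (m-2) (le_refl _) (x', 0) hp₀
  have hE0' : (C2 - c) * a (x', 0) = C2 * b (x', 0) := by
    have i2 : m - 2 + 1 = m - 1 := by omega
    have i3 : m - 2 - 1 = m - 3 := by omega
    rw [i2, i3] at hE0
    exact hE0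
  have hkey : ∀ᶠ s in l, Dym (x', s)
      = g2 (x', s) + C2 * ((b (x', s) - b (x', 0)) / s)
        - (C2 - c) * ((a (x', s) - a (x', 0)) / s) := by
    filter_upwards [self_mem_nhdsWithin] with s hs
    have hs0 : s ≠ 0 := ne_of_gt hs.1
    have hpQ : ((x', s) : EE k) ∈ boxQ k δ := ⟨fun i => hx' i, ⟨hs.1.le, hs.2⟩⟩
    have hstar := star hδ hu hm2 hG hpde (m-2) (le_refl _) (x', s) hpQ hs.1
    have i1 : m - 2 + 2 = m := by omega
    have i2 : m - 2 + 1 = m - 1 := by omega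
    have i3 : m - 2 - 1 = m - 3 := by omega
    rw [i1, i2, i3] at hstar
    have h2 : ((x', s) : EE k).2 = s := rfl
    rw [h2] at hstar
    -- hstar : s * Dym (x',s) + (C2 - c) * a (x',s) = s * g2 (x',s) + C2 * b (x',s)
    have key1 : s * Dym (x', s)
        = s * g2 (x', s) + C2 * (b (x', s) - b (x', 0)) - (C2 - c) * (a (x', s) - a (x', 0)) := by
      linear_combination hstar - hE0'
    have hcan : ∀ X : ℝ, s * (X / s) = X := fun X => by
      rw [mul_comm]; exact div_mul_cancel₀ X hs0
    have key2 : s * (g2 (x', s) + C2 * ((b (x', s) - b (x', 0)) / s)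
        - (C2 - c) * ((a (x', s) - a (x', 0)) / s))
        = s * g2 (x', s) + C2 * (b (x', s) - b (x', 0)) - (C2 - c) * (a (x', s) - a (x', 0)) := by
      rw [mul_sub, mul_add, mul_left_comm s C2, hcan, mul_left_comm s (C2 - c), hcan]
    exact mul_left_cancel₀ hs0 (key1.trans key2.symm)
  have hRlim : Tendsto (fun s => g2 (x', s) + C2 * ((b (x', s) - b (x', 0)) / s)
      - (C2 - c) * ((a (x', s) - a (x', 0)) / s)) l
      (𝓝 (g2 (x', 0) + C2 * g2 (x', 0) - (C2 - c) * Dym (x', 0))) :=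
    (hT2.add hψterm).sub (hslφ.const_mul _)
  have hfinal : Dym (x', 0)
      = g2 (x', 0) + C2 * g2 (x', 0) - (C2 - c) * Dym (x', 0) :=
    tendsto_nhds_unique (hT1.congr' hkey) hRlim
  have hc1 : ((m-1:ℕ):ℝ) = C2 + 1 := by
    rw [hC2]
    have : m - 1 = (m-2) + 1 := by omega
    rw [this]; push_cast; ring
  rw [hc1]
  linarith [hfinal]


-- ######## additive good lemmas and good_G ########

lemma DyI_add (hδ : 0 < δ) {j : ℕ} : ∀ {r : ℕ} {f g : EE k → ℝ},
    ContDiffOn ℝ (r:ℕ) f (boxQ k δ) → ContDiffOn ℝ (r:ℕ) g (boxQ k δ) → j ≤ r →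
    EqOn (DyI k δ j (fun q => f q + g q)) (fun q => DyI k δ j f q + DyI k δ j g q) (boxQ k δ) := by
  induction j with
  | zero => intro r f g _ _ _; exact fun p hp => rfl
  | succ j ih =>
    intro r f g hf hg hj p hp
    rw [DyI_succ]
    have h1 : EqOn (Dy k δ (fun q => f q + g q)) (fun q => Dy k δ f q + Dy k δ g q) (boxQ k δ) :=
      fun q hq => Dw_add hδ (CD_diff hδ hf (by omega) hq) (CD_diff hδ hg (by omega) hq) hq
    rw [DyI_congr h1 j hp]
    have h3 : ContDiffOn ℝ ((r-1 : ℕ)) (Dy k δ f) (boxQ k δ) := by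
      apply CD_Dw hδ; have : r - 1 + 1 = r := by omega
      rw [this]; exact hf
    have h4 : ContDiffOn ℝ ((r-1 : ℕ)) (Dy k δ g) (boxQ k δ) := by
      apply CD_Dw hδ; have : r - 1 + 1 = r := by omega
      rw [this]; exact hg
    have := ih h3 h4 (by omega) hp
    rw [this]
    show _ = DyI k δ (j+1) f p + DyI k δ (j+1) g p
    rw [DyI_succ, DyI_succ]

lemma goodTo_refl {r : ℕ} (F : EE k → ℝ) : goodTo k δ r F F := fun _ _ _ _ => rfl

lemma goodTo_add (hδ : 0 < δ) {r r₀ : ℕ} {F F' G G' : EE k → ℝ}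
    (hF : ContDiffOn ℝ (r₀:ℕ) F (boxQ k δ)) (hF' : ContDiffOn ℝ (r₀:ℕ) F' (boxQ k δ))
    (hG : ContDiffOn ℝ (r₀:ℕ) G (boxQ k δ)) (hG' : ContDiffOn ℝ (r₀:ℕ) G' (boxQ k δ))
    (hr : r ≤ r₀) (h1 : goodTo k δ r F F') (h2 : goodTo k δ r G G') :
    goodTo k δ r (fun q => F q + G q) (fun q => F' q + G' q) := by
  intro j hj p hp
  have hpQ := Sb_subset hδ hp
  rw [DyI_add hδ hF hG (by omega) hpQ, DyI_add hδ hF' hG' (by omega) hpQ]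
  show DyI k δ j F p + DyI k δ j G p = DyI k δ j F' p + DyI k δ j G' p
  rw [h1 j hj p hp, h2 j hj p hp]

lemma goodTo_congr {r : ℕ} {F F' G G' : EE k → ℝ}
    (hδ : 0 < δ) (hF : EqOn F F' (boxQ k δ)) (hG : EqOn G G' (boxQ k δ))
    (h : goodTo k δ r F G) : goodTo k δ r F' G' := by
  intro j hj p hp
  have hpQ := Sb_subset hδ hp
  rw [← DyI_congr hF j hpQ, ← DyI_congr hG j hpQ]
  exact h j hj p hp

-- The key special lemma for the dangerous term (∂ᵧu)²·∂ᵧ∂ᵧu.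
lemma goodTo_Tyy (hδ : 0 < δ) {m J : ℕ} {u v : EE k → ℝ}
    (hu : ContDiffOn ℝ (m:ℕ) u (boxQ k δ)) (hv : ContDiffOn ℝ (m:ℕ) v (boxQ k δ))
    (hm2 : 2 ≤ m) (hJ1 : 1 ≤ J) (hJm : J ≤ m - 1)
    (hgood : goodTo k δ J u v)
    (hDyu0 : ∀ p ∈ Sb k δ, Dy k δ u p = 0) (hDyv0 : ∀ p ∈ Sb k δ, Dy k δ v p = 0) :
    goodTo k δ (J-1) (fun q => Dy k δ u q * Dy k δ u q * Dy k δ (Dy k δ u) q)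
      (fun q => Dy k δ v q * Dy k δ v q * Dy k δ (Dy k δ v) q) := by
  intro j hj p hp
  have hpQ := Sb_subset hδ hp
  -- smoothness
  have hCu1 : ContDiffOn ℝ ((m-1:ℕ)) (Dy k δ u) (boxQ k δ) := CD_Dw' hδ hu (by omega) _
  have hCv1 : ContDiffOn ℝ ((m-1:ℕ)) (Dy k δ v) (boxQ k δ) := CD_Dw' hδ hv (by omega) _
  have hCu2 : ContDiffOn ℝ ((m-2:ℕ)) (Dy k δ (Dy k δ u)) (boxQ k δ) := by
    have := CD_Dw' hδ hCu1 (by omega) ((0:Fin k → ℝ), (1:ℝ))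
    have he : m - 1 - 1 = m - 2 := by omega
    rwa [he] at this
  have hCv2 : ContDiffOn ℝ ((m-2:ℕ)) (Dy k δ (Dy k δ v)) (boxQ k δ) := by
    have := CD_Dw' hδ hCv1 (by omega) ((0:Fin k → ℝ), (1:ℝ))
    have he : m - 1 - 1 = m - 2 := by omega
    rwa [he] at this
  have hCusq : ContDiffOn ℝ ((m-2:ℕ)) (fun q => Dy k δ u q * Dy k δ u q) (boxQ k δ) := by
    have := (hCu1.of_le (cast_le_cast (show m-2 ≤ m-1 by omega)))
    exact this.mul this
  have hCvsq : ContDiffOn ℝ ((m-2:ℕ)) (fun q => Dy k δ v q * Dy k δ v q) (boxQ k δ) := by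
    have := (hCv1.of_le (cast_le_cast (show m-2 ≤ m-1 by omega)))
    exact this.mul this
  -- goods for the factors
  have hgDy : goodTo k δ (J-1) (Dy k δ u) (Dy k δ v) := by
    have : J - 1 + 1 = J := by omega
    apply goodTo_shift
    rw [this]
    exact hgood
  have hgsq : goodTo k δ (J-1) (fun q => Dy k δ u q * Dy k δ u q)
      (fun q => Dy k δ v q * Dy k δ v q) :=
    goodTo_mul hδ (hCu1.of_le (cast_le_cast (show m-2 ≤ m-1 by omega)))
      (hCv1.of_le (cast_le_cast (show m-2 ≤ m-1 by omega)))
      (hCu1.of_le (cast_le_cast (show m-2 ≤ m-1 by omega)))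
      (hCv1.of_le (cast_le_cast (show m-2 ≤ m-1 by omega)))
      (by omega) hgDy hgDy
  -- Leibniz expansion on both sides
  rw [DyI_mul hδ hCusq hCu2 (by omega) p hpQ, DyI_mul hδ hCvsq hCv2 (by omega) p hpQ]
  refine Finset.sum_congr rfl fun a ha => ?_
  have haj := Finset.mem_range.mp ha
  rcases Nat.eq_zero_or_pos a with h0 | hapos
  · subst h0
    have e1 : DyI k δ 0 (fun q => Dy k δ u q * Dy k δ u q) p = Dy k δ u p * Dy k δ u p := rfl
    have e2 : DyI k δ 0 (fun q => Dy k δ v q * Dy k δ v q) p = Dy k δ v p * Dy k δ v p := rfl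
    rw [e1, e2, hDyu0 p hp, hDyv0 p hp]
    ring
  · have e1 := hgsq a (by omega) p hp
    have key : ∀ w : EE k → ℝ, DyI k δ (j - a + 2) w = DyI k δ (j - a) (Dy k δ (Dy k δ w)) := by
      intro w
      rw [DyI_succ, DyI_succ]
    have e2 : DyI k δ (j - a) (Dy k δ (Dy k δ u)) p
        = DyI k δ (j - a) (Dy k δ (Dy k δ v)) p := by
      rw [← key u, ← key v]
      exact hgood (j - a + 2) (by omega) p hp
    rw [e1, e2]

lemma good_G (hδ : 0 < δ) {m J : ℕ} {u v : EE k → ℝ}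
    (hu : ContDiffOn ℝ (m:ℕ) u (boxQ k δ)) (hv : ContDiffOn ℝ (m:ℕ) v (boxQ k δ))
    (hm2 : 2 ≤ m) (hJ1 : 1 ≤ J) (hJm : J ≤ m - 1)
    (hgood : goodTo k δ J u v)
    (hDyu0 : ∀ p ∈ Sb k δ, Dy k δ u p = 0) (hDyv0 : ∀ p ∈ Sb k δ, Dy k δ v p = 0) :
    goodTo k δ (J-1) (Gfun k δ u) (Gfun k δ v) := by
  set r := J - 1 with hr
  have hrm : r ≤ m - 2 := by omega
  have hCD1 : ∀ (w : EE k → ℝ), ContDiffOn ℝ (m:ℕ) w (boxQ k δ) → ∀ (a : EE k),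
      ContDiffOn ℝ ((m-1:ℕ)) (Dw k δ w a) (boxQ k δ) := fun w hw a => CD_Dw' hδ hw (by omega) a
  have hCD2 : ∀ (w : EE k → ℝ), ContDiffOn ℝ (m:ℕ) w (boxQ k δ) → ∀ (a b : EE k),
      ContDiffOn ℝ ((m-2:ℕ)) (Dw k δ (Dw k δ w a) b) (boxQ k δ) := by
    intro w hw a b
    have := CD_Dw' hδ (hCD1 w hw a) (by omega) b
    have he : m - 1 - 1 = m - 2 := by omega
    rwa [he] at this
  have hle12 : ((m-2:ℕ) : WithTop ℕ∞) ≤ ((m-1:ℕ) : WithTop ℕ∞) := cast_le_cast (by omega)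
  -- first derivatives are good to order r (in fact J for tangential)
  have hgD : ∀ jj : Fin k ⊕ Unit,
      goodTo k δ r (Dw k δ u (dirVec k jj)) (Dw k δ v (dirVec k jj)) := by
    intro jj
    rcases jj with i | _
    · exact goodTo_of_le (goodTo_Dwe hδ hu hv hgood (by omega) i) (by omega)
    · have : r + 1 = J := by omega
      apply goodTo_shift
      rw [this]
      exact hgood
  -- second derivatives good to order r except the (inr, inr) pair
  have hgD2 : ∀ jj ll : Fin k ⊕ Unit, (jj ≠ Sum.inr () ∨ ll ≠ Sum.inr ()) →
      goodTo k δ r (Dw k δ (Dw k δ u (dirVec k ll)) (dirVec k jj))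
        (Dw k δ (Dw k δ v (dirVec k ll)) (dirVec k jj)) := by
    intro jj ll hne
    rcases ll with i | iu
    · -- inner tangential : Dw u (e i) is good to J with CD (m-1)
      have hinner : goodTo k δ J (Dw k δ u (dirVec k (Sum.inl i)))
          (Dw k δ v (dirVec k (Sum.inl i))) :=
        goodTo_Dwe hδ hu hv hgood (by omega) i
      rcases jj with i' | _
      · exact goodTo_Dwe hδ (hCD1 u hu _) (hCD1 v hv _)
          (goodTo_of_le hinner (by omega)) (by omega) i'
      · have : r + 1 = J := by omega
        apply goodTo_shift
        rw [this]
        exact hinner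
    · -- inner vertical : Dy u is good to r = J - 1 with CD (m-1)
      have hinner : goodTo k δ r (Dw k δ u (dirVec k (Sum.inr iu)))
          (Dw k δ v (dirVec k (Sum.inr iu))) := hgD (Sum.inr iu)
      rcases jj with i' | iu'
      · exact goodTo_Dwe hδ (hCD1 u hu _) (hCD1 v hv _) hinner (by omega) i'
      · exfalso
        rcases hne with h | h
        · exact h rfl
        · exact h rfl
  -- W is good to order r
  have hgW : goodTo k δ r (Wfun k δ u) (Wfun k δ v) := by
    have hsum : goodTo k δ r
        (fun q => ∑ jj : Fin k ⊕ Unit, (Dw k δ u (dirVec k jj) q)^2)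
        (fun q => ∑ jj : Fin k ⊕ Unit, (Dw k δ v (dirVec k jj) q)^2) := by
      apply goodTo_sum hδ (r₀ := m - 2)
      · intro jj _
        exact ((hCD1 u hu _).of_le hle12).pow 2
      · intro jj _
        exact ((hCD1 v hv _).of_le hle12).pow 2
      · exact hrm
      · intro jj _
        have hsq : ∀ (w : EE k → ℝ), (fun q => (Dw k δ w (dirVec k jj) q)^2)
            = fun q => Dw k δ w (dirVec k jj) q * Dw k δ w (dirVec k jj) q := by
          intro w; funext q; ring
        rw [hsq u, hsq v]
        exact goodTo_mul hδ ((hCD1 u hu _).of_le hle12) ((hCD1 v hv _).of_le hle12)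
          ((hCD1 u hu _).of_le hle12) ((hCD1 v hv _).of_le hle12) hrm
          (hgD jj) (hgD jj)
    have h1 : goodTo k δ r (fun q => 1 + ∑ jj : Fin k ⊕ Unit, (Dw k δ u (dirVec k jj) q)^2)
        (fun q => 1 + ∑ jj : Fin k ⊕ Unit, (Dw k δ v (dirVec k jj) q)^2) := by
      apply goodTo_add hδ (r₀ := m - 2) contDiffOn_const contDiffOn_const
      · apply ContDiffOn.sum; intro jj _; exact ((hCD1 u hu _).of_le hle12).pow 2
      · apply ContDiffOn.sum; intro jj _; exact ((hCD1 v hv _).of_le hle12).pow 2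
      · exact hrm
      · exact goodTo_refl _
      · exact hsum
    exact h1
  -- N is good to order r
  have hgN : goodTo k δ r (Nfun k δ u) (Nfun k δ v) := by
    have hT : ∀ jj ll : Fin k ⊕ Unit,
        goodTo k δ r
          (fun q => Dw k δ u (dirVec k jj) q * Dw k δ u (dirVec k ll) q
            * Dw k δ (Dw k δ u (dirVec k ll)) (dirVec k jj) q)
          (fun q => Dw k δ v (dirVec k jj) q * Dw k δ v (dirVec k ll) q
            * Dw k δ (Dw k δ v (dirVec k ll)) (dirVec k jj) q) := by
      intro jj ll
      by_cases hd : jj = Sum.inr () ∧ ll = Sum.inr ()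
      · obtain ⟨h1, h2⟩ := hd
        subst h1; subst h2
        exact goodTo_Tyy hδ hu hv hm2 hJ1 hJm hgood hDyu0 hDyv0
      · have hne : jj ≠ Sum.inr () ∨ ll ≠ Sum.inr () := by tauto
        have hfst : goodTo k δ r
            (fun q => Dw k δ u (dirVec k jj) q * Dw k δ u (dirVec k ll) q)
            (fun q => Dw k δ v (dirVec k jj) q * Dw k δ v (dirVec k ll) q) :=
          goodTo_mul hδ ((hCD1 u hu _).of_le hle12) ((hCD1 v hv _).of_le hle12)
            ((hCD1 u hu _).of_le hle12) ((hCD1 v hv _).of_le hle12) hrm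
            (hgD jj) (hgD ll)
        exact goodTo_mul hδ
          (((hCD1 u hu _).of_le hle12).mul ((hCD1 u hu _).of_le hle12))
          (((hCD1 v hv _).of_le hle12).mul ((hCD1 v hv _).of_le hle12))
          (hCD2 u hu _ _) (hCD2 v hv _ _) hrm hfst (hgD2 jj ll hne)
    apply goodTo_sum hδ (r₀ := m - 2)
    · intro jj _
      apply ContDiffOn.sum; intro ll _
      exact (((hCD1 u hu _).of_le hle12).mul ((hCD1 u hu _).of_le hle12)).mul (hCD2 u hu _ _)
    · intro jj _
      apply ContDiffOn.sum; intro ll _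
      exact (((hCD1 v hv _).of_le hle12).mul ((hCD1 v hv _).of_le hle12)).mul (hCD2 v hv _ _)
    · exact hrm
    · intro jj _
      apply goodTo_sum hδ (r₀ := m - 2)
      · intro ll _
        exact (((hCD1 u hu _).of_le hle12).mul ((hCD1 u hu _).of_le hle12)).mul (hCD2 u hu _ _)
      · intro ll _
        exact (((hCD1 v hv _).of_le hle12).mul ((hCD1 v hv _).of_le hle12)).mul (hCD2 v hv _ _)
      · exact hrm
      · intro ll _
        exact hT jj ll
  -- W⁻¹ good
  have hgWi : goodTo k δ r (fun q => (Wfun k δ u q)⁻¹) (fun q => (Wfun k δ v q)⁻¹) :=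
    goodTo_recip hδ (CD_Wfun hδ hu hm2) (CD_Wfun hδ hv hm2) hrm
      (fun p _ => Wfun_ne p) (fun p _ => Wfun_ne p) hgW
  -- quotient good
  have hgQ : goodTo k δ r (fun q => Nfun k δ u q / Wfun k δ u q)
      (fun q => Nfun k δ v q / Wfun k δ v q) := by
    have hEu : EqOn (fun q => Nfun k δ u q * (Wfun k δ u q)⁻¹)
        (fun q => Nfun k δ u q / Wfun k δ u q) (boxQ k δ) := by
      intro q _; simp [div_eq_mul_inv]
    have hEv : EqOn (fun q => Nfun k δ v q * (Wfun k δ v q)⁻¹)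
        (fun q => Nfun k δ v q / Wfun k δ v q) (boxQ k δ) := by
      intro q _; simp [div_eq_mul_inv]
    apply goodTo_congr hδ hEu hEv
    exact goodTo_mul hδ (CD_Nfun hδ hu hm2) (CD_Nfun hδ hv hm2)
      ((CD_Wfun hδ hu hm2).inv (fun p _ => Wfun_ne p))
      ((CD_Wfun hδ hv hm2).inv (fun p _ => Wfun_ne p)) hrm hgN hgWi
  -- tangential Laplacian good
  have hgT : goodTo k δ r (Tfun k δ u) (Tfun k δ v) := by
    apply goodTo_sum hδ (r₀ := m - 2)
    · intro i _; exact hCD2 u hu _ _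
    · intro i _; exact hCD2 v hv _ _
    · exact hrm
    · intro i _
      exact hgD2 (Sum.inl i) (Sum.inl i) (Or.inl (by simp))
  -- assemble
  have := goodTo_sub hδ (r₀ := m - 2)
    ((CD_Nfun hδ hu hm2).div (CD_Wfun hδ hu hm2) (fun p _ => Wfun_ne p))
    ((CD_Nfun hδ hv hm2).div (CD_Wfun hδ hv hm2) (fun p _ => Wfun_ne p))
    (CD_Tfun hδ hu hm2) (CD_Tfun hδ hv hm2) hrm hgQ hgT
  exact this


theorem main_result (n m : ℕ) (hn : 2 ≤ n) (hm2 : 2 ≤ m) (hmn : m ≤ n)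
    (δ : ℝ) (hδ : 0 < δ)
    (u v : ((Fin (n - 1) → ℝ) × ℝ) → ℝ)
    (hu : ContDiffOn ℝ m u (boxQ (n - 1) δ))
    (hv : ContDiffOn ℝ m v (boxQ (n - 1) δ))
    (hueq : IsHypMinimalGraph n δ u)
    (hveq : IsHypMinimalGraph n δ v)
    (hbd : ∀ x' : Fin (n - 1) → ℝ, (∀ i, x' i ∈ Set.Ioo (-δ) δ) →
      u (x', 0) = v (x', 0)) :
    ∀ x' : Fin (n - 1) → ℝ, (∀ i, x' i ∈ Set.Ioo (-δ) δ) →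
      (∀ i : ℕ, i ≤ m →
        iteratedDerivWithin i (fun s => u (x', s)) (Set.Ico 0 δ) 0
          = iteratedDerivWithin i (fun s => v (x', s)) (Set.Ico 0 δ) 0)
      ∧ derivWithin (fun s => u (x', s)) (Set.Ico 0 δ) 0 = 0
      ∧ derivWithin (fun s => v (x', s)) (Set.Ico 0 δ) 0 = 0 := by
  intro x' hx'
  have hGu := CD_Gfun hδ hu hm2
  have hGv := CD_Gfun hδ hv hm2
  have hpdeu := pde_of_min hδ hueq
  have hpdev := pde_of_min hδ hveq
  have hn0 : (n:ℝ) ≠ 0 := Nat.cast_ne_zero.mpr (by omega)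
  -- first y-derivatives vanish on the whole boundary slice
  have hZ : ∀ (w : ((Fin (n - 1) → ℝ) × ℝ) → ℝ),
      ContDiffOn ℝ m w (boxQ (n - 1) δ) →
      ContDiffOn ℝ ((m-2:ℕ)) (Gfun (n-1) δ w) (boxQ (n-1) δ) →
      PDE (n-1) δ (n:ℝ) w →
      ∀ p ∈ Sb (n-1) δ, Dy (n-1) δ w p = 0 := by
    intro w hw hGw hpw p hp
    have h := limit0 hδ hw hm2 hGw hpw 0 (by omega) p hp
    have h' : (((0:ℕ):ℝ) - (n:ℝ)) * DyI (n-1) δ 1 w p = 0 := by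
      rw [h]; simp
    have hco : (((0:ℕ):ℝ) - (n:ℝ)) ≠ 0 := by
      simp only [Nat.cast_zero, zero_sub, ne_eq, neg_eq_zero]
      exact hn0
    have := (mul_eq_zero.mp h').resolve_left hco
    exact this
  have hZu := hZ u hu hGu hpdeu
  have hZv := hZ v hv hGv hpdev
  -- the main induction on the order of the jet
  have main : ∀ J, J ≤ m → goodTo (n-1) δ J u v := by
    intro J
    induction J with
    | zero =>
      intro _ j hj p hp
      have hj0 : j = 0 := by omega
      subst hj0
      show u p = v p
      have hpp : p = (p.1, 0) := Prod.ext rfl hp.2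
      rw [hpp]
      exact hbd p.1 hp.1
    | succ J ih =>
      intro hJ
      have hgJ := ih (by omega)
      intro j hj p hp
      by_cases hjJ : j ≤ J
      · exact hgJ j hjJ p hp
      have hj1 : j = J + 1 := by omega
      subst hj1
      rcases Nat.eq_zero_or_pos J with h0 | hJpos
      · subst h0
        show DyI (n-1) δ 1 u p = DyI (n-1) δ 1 v p
        have e1 : DyI (n-1) δ 1 u p = Dy (n-1) δ u p := rfl
        have e2 : DyI (n-1) δ 1 v p = Dy (n-1) δ v p := rfl
        rw [e1, e2, hZu p hp, hZv p hp]
      · have hJm1 : J ≤ m - 1 := by omega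
        have hGeq := good_G hδ hu hv hm2 hJpos hJm1 hgJ hZu hZv (J-1) (le_refl _) p hp
        have hlift : ∀ (w : ((Fin (n - 1) → ℝ) × ℝ) → ℝ),
            ContDiffOn ℝ m w (boxQ (n - 1) δ) →
            ContDiffOn ℝ ((m-2:ℕ)) (Gfun (n-1) δ w) (boxQ (n-1) δ) →
            PDE (n-1) δ (n:ℝ) w →
            ((J:ℝ) - (n:ℝ)) * DyI (n-1) δ (J+1) w p
              = (J:ℝ) * DyI (n-1) δ (J-1) (Gfun (n-1) δ w) p := by
          intro w hw hGw hpw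
          rcases le_or_gt J (m-2) with hle | hgt
          · exact limit0 hδ hw hm2 hGw hpw J hle p hp
          · have i2 : m = J + 1 := by omega
            have h := limit_top hδ hw hm2 hGw hpw p hp
            rw [i2] at h
            simp only [Nat.add_sub_cancel] at h
            have i3 : J + 1 - 2 = J - 1 := by omega
            rw [i3] at h
            exact h
        have hcu := hlift u hu hGu hpdeu
        have hcv := hlift v hv hGv hpdev
        have hne : (J:ℝ) - (n:ℝ) ≠ 0 := by
          have hJn : J < n := by omega
          have h1 : (J:ℝ) < (n:ℝ) := by exact_mod_cast hJn
          exact sub_ne_zero_of_ne (ne_of_lt h1)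
        show DyI (n-1) δ (J+1) u p = DyI (n-1) δ (J+1) v p
        have hfin : ((J:ℝ) - (n:ℝ)) * DyI (n-1) δ (J+1) u p
            = ((J:ℝ) - (n:ℝ)) * DyI (n-1) δ (J+1) v p := by
          rw [hcu, hcv, hGeq]
        exact mul_left_cancel₀ hne hfin
  have hQ0 : ((x', (0:ℝ)) : (Fin (n-1) → ℝ) × ℝ) ∈ boxQ (n-1) δ :=
    ⟨hx', ⟨le_refl 0, hδ⟩⟩
  have hS0 : ((x', (0:ℝ)) : (Fin (n-1) → ℝ) × ℝ) ∈ Sb (n-1) δ := ⟨hx', rfl⟩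
  refine ⟨?_, ?_, ?_⟩
  · intro i hi
    rw [iteratedDerivWithin_slice hδ hu hx' i hi 0 (left_mem_Ico.mpr hδ),
      iteratedDerivWithin_slice hδ hv hx' i hi 0 (left_mem_Ico.mpr hδ)]
    exact main m (le_refl m) i hi (x', 0) hS0
  · have hd := slice_hasDerivWithinAt hx' (left_mem_Ico.mpr hδ)
      (CD_diff hδ hu (by omega) hQ0)
    rw [hd.derivWithin ((uniqueDiffOn_Ico 0 δ) 0 (left_mem_Ico.mpr hδ))]
    exact hZu (x', 0) hS0
  · have hd := slice_hasDerivWithinAt hx' (left_mem_Ico.mpr hδ)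
      (CD_diff hδ hv (by omega) hQ0)
    rw [hd.derivWithin ((uniqueDiffOn_Ico 0 δ) 0 (left_mem_Ico.mpr hδ))]
    exact hZv (x', 0) hS0

end Aux12
end AuxNamespace

/-- Two minimal-surface graphs in hyperbolic space, `C^m` up to the ideal
boundary `{y = 0}` with the same boundary trace, have the same pure
`y`-derivatives at `y = 0` up to order `m`; in particular the first
`y`-derivative of each vanishes. -/
theorem stmt_12 (n m : ℕ) (hn : 2 ≤ n) (hm2 : 2 ≤ m) (hmn : m ≤ n)
    (δ : ℝ) (hδ : 0 < δ)
    (u v : ((Fin (n - 1) → ℝ) × ℝ) → ℝ)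
    (hu : ContDiffOn ℝ m u (boxQ (n - 1) δ))
    (hv : ContDiffOn ℝ m v (boxQ (n - 1) δ))
    (hueq : IsHypMinimalGraph n δ u)
    (hveq : IsHypMinimalGraph n δ v)
    (hbd : ∀ x' : Fin (n - 1) → ℝ, (∀ i, x' i ∈ Set.Ioo (-δ) δ) →
      u (x', 0) = v (x', 0)) :
    ∀ x' : Fin (n - 1) → ℝ, (∀ i, x' i ∈ Set.Ioo (-δ) δ) →
      (∀ i : ℕ, i ≤ m →
        iteratedDerivWithin i (fun s => u (x', s)) (Set.Ico 0 δ) 0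
          = iteratedDerivWithin i (fun s => v (x', s)) (Set.Ico 0 δ) 0)
      ∧ derivWithin (fun s => u (x', s)) (Set.Ico 0 δ) 0 = 0
      ∧ derivWithin (fun s => v (x', s)) (Set.Ico 0 δ) 0 = 0 := by
  exact Aux12.main_result n m hn hm2 hmn δ hδ u v hu hv hueq hveq hbd
end
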